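/- arXiv:2605.03113 — 2 statements merged into one kernel-verified Lean document; each statement's English description precedes it below -/
import Mathlib

section
/- Coherence theorem for unitless lax linearly distributive categories: the free unitless lax LD category on any type S is thin. Precisely, let 𝓕 be a lax LD category together with a function η : S → Ob(𝓕) satisfying the universal property of the free lax LD category on S; then for all objects X, Y of 𝓕 there is at most one morphism X → Y. -/
open CategoryTheory

namespace LaxLDCoherence

universe v u v₁ u₁ v₂ u₂

/-- A (unitless) lax linearly distributive category structure on a category `C`:
the associators are not required to be invertible. -/
structure LaxLD (C : Type u) [Category.{v} C] where
  ot : C → C → C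
  pa : C → C → C
  otHom : ∀ {X₁ Y₁ X₂ Y₂ : C}, (X₁ ⟶ Y₁) → (X₂ ⟶ Y₂) → (ot X₁ X₂ ⟶ ot Y₁ Y₂)
  paHom : ∀ {X₁ Y₁ X₂ Y₂ : C}, (X₁ ⟶ Y₁) → (X₂ ⟶ Y₂) → (pa X₁ X₂ ⟶ pa Y₁ Y₂)
  otHom_id : ∀ X Y : C, otHom (𝟙 X) (𝟙 Y) = 𝟙 (ot X Y)
  otHom_comp :
    ∀ {X₁ Y₁ Z₁ X₂ Y₂ Z₂ : C} (f₁ : X₁ ⟶ Y₁) (g₁ : Y₁ ⟶ Z₁) (f₂ : X₂ ⟶ Y₂) (g₂ : Y₂ ⟶ Z₂),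
      otHom (f₁ ≫ g₁) (f₂ ≫ g₂) = otHom f₁ f₂ ≫ otHom g₁ g₂
  paHom_id : ∀ X Y : C, paHom (𝟙 X) (𝟙 Y) = 𝟙 (pa X Y)
  paHom_comp :
    ∀ {X₁ Y₁ Z₁ X₂ Y₂ Z₂ : C} (f₁ : X₁ ⟶ Y₁) (g₁ : Y₁ ⟶ Z₁) (f₂ : X₂ ⟶ Y₂) (g₂ : Y₂ ⟶ Z₂),
      paHom (f₁ ≫ g₁) (f₂ ≫ g₂) = paHom f₁ f₂ ≫ paHom g₁ g₂
  α : ∀ A B E : C, ot A (ot B E) ⟶ ot (ot A B) E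
  pα : ∀ A B E : C, pa A (pa B E) ⟶ pa (pa A B) E
  δl : ∀ A B E : C, ot A (pa B E) ⟶ pa (ot A B) E
  δr : ∀ A B E : C, ot (pa A B) E ⟶ pa A (ot B E)
  α_natural :
    ∀ {A A' B B' E E' : C} (f : A ⟶ A') (g : B ⟶ B') (h : E ⟶ E'),
      otHom f (otHom g h) ≫ α A' B' E' = α A B E ≫ otHom (otHom f g) h
  pα_natural :
    ∀ {A A' B B' E E' : C} (f : A ⟶ A') (g : B ⟶ B') (h : E ⟶ E'),
      paHom f (paHom g h) ≫ pα A' B' E' = pα A B E ≫ paHom (paHom f g) h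
  δl_natural :
    ∀ {A A' B B' E E' : C} (f : A ⟶ A') (g : B ⟶ B') (h : E ⟶ E'),
      otHom f (paHom g h) ≫ δl A' B' E' = δl A B E ≫ paHom (otHom f g) h
  δr_natural :
    ∀ {A A' B B' E E' : C} (f : A ⟶ A') (g : B ⟶ B') (h : E ⟶ E'),
      otHom (paHom f g) h ≫ δr A' B' E' = δr A B E ≫ paHom f (otHom g h)
  P1 : ∀ A B E D : C,
    α A B (ot E D) ≫ α (ot A B) E D =
      otHom (𝟙 A) (α B E D) ≫ α A (ot B E) D ≫ otHom (α A B E) (𝟙 D)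
  P2 : ∀ A B E D : C,
    α A B (pa E D) ≫ δl (ot A B) E D =
      otHom (𝟙 A) (δl B E D) ≫ δl A (ot B E) D ≫ paHom (α A B E) (𝟙 D)
  P3 : ∀ A B E D : C,
    otHom (𝟙 A) (δr B E D) ≫ δl A B (ot E D) =
      α A (pa B E) D ≫ otHom (δl A B E) (𝟙 D) ≫ δr (ot A B) E D
  P4 : ∀ A B E D : C,
    δl A B (pa E D) ≫ pα (ot A B) E D =
      otHom (𝟙 A) (pα B E D) ≫ δl A (pa B E) D ≫ paHom (δl A B E) (𝟙 D)
  P5 : ∀ A B E D : C,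
    δr A B (ot E D) ≫ paHom (𝟙 A) (α B E D) =
      α (pa A B) E D ≫ otHom (δr A B E) (𝟙 D) ≫ δr A (ot B E) D
  P6 : ∀ A B E D : C,
    δl (pa A B) E D ≫ paHom (δr A B E) (𝟙 D) =
      δr A B (pa E D) ≫ paHom (𝟙 A) (δl B E D) ≫ pα A (ot B E) D
  P7 : ∀ A B E D : C,
    otHom (pα A B E) (𝟙 D) ≫ δr (pa A B) E D =
      δr A (pa B E) D ≫ paHom (𝟙 A) (δr B E D) ≫ pα A B (ot E D)
  P8 : ∀ A B E D : C,
    pα A B (pa E D) ≫ pα (pa A B) E D =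
      paHom (𝟙 A) (pα B E D) ≫ pα A (pa B E) D ≫ paHom (pα A B E) (𝟙 D)

/-- A strict functor of lax LD categories. -/
structure StrictLaxLDFunctor (Cc : Type u₁) [Category.{v₁} Cc] (Dd : Type u₂) [Category.{v₂} Dd]
    (LC : LaxLD Cc) (LDd : LaxLD Dd) where
  toFunctor : Cc ⥤ Dd
  obj_ot : ∀ X Y : Cc, toFunctor.obj (LC.ot X Y) = LDd.ot (toFunctor.obj X) (toFunctor.obj Y)
  obj_pa : ∀ X Y : Cc, toFunctor.obj (LC.pa X Y) = LDd.pa (toFunctor.obj X) (toFunctor.obj Y)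
  map_ot : ∀ {X₁ Y₁ X₂ Y₂ : Cc} (f : X₁ ⟶ Y₁) (g : X₂ ⟶ Y₂),
    toFunctor.map (LC.otHom f g) =
      eqToHom (obj_ot X₁ X₂) ≫ LDd.otHom (toFunctor.map f) (toFunctor.map g) ≫
        eqToHom (obj_ot Y₁ Y₂).symm
  map_pa : ∀ {X₁ Y₁ X₂ Y₂ : Cc} (f : X₁ ⟶ Y₁) (g : X₂ ⟶ Y₂),
    toFunctor.map (LC.paHom f g) =
      eqToHom (obj_pa X₁ X₂) ≫ LDd.paHom (toFunctor.map f) (toFunctor.map g) ≫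
        eqToHom (obj_pa Y₁ Y₂).symm
  map_α : ∀ A B E : Cc,
    toFunctor.map (LC.α A B E) =
      eqToHom (by simp only [obj_ot]) ≫
        LDd.α (toFunctor.obj A) (toFunctor.obj B) (toFunctor.obj E) ≫
        eqToHom (by simp only [obj_ot])
  map_pα : ∀ A B E : Cc,
    toFunctor.map (LC.pα A B E) =
      eqToHom (by simp only [obj_pa]) ≫
        LDd.pα (toFunctor.obj A) (toFunctor.obj B) (toFunctor.obj E) ≫
        eqToHom (by simp only [obj_pa])
  map_δl : ∀ A B E : Cc,
    toFunctor.map (LC.δl A B E) =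
      eqToHom (by simp only [obj_ot, obj_pa]) ≫
        LDd.δl (toFunctor.obj A) (toFunctor.obj B) (toFunctor.obj E) ≫
        eqToHom (by simp only [obj_ot, obj_pa])
  map_δr : ∀ A B E : Cc,
    toFunctor.map (LC.δr A B E) =
      eqToHom (by simp only [obj_ot, obj_pa]) ≫
        LDd.δr (toFunctor.obj A) (toFunctor.obj B) (toFunctor.obj E) ≫
        eqToHom (by simp only [obj_ot, obj_pa])

end LaxLDCoherence



namespace LaxLDCoherence
namespace Syn

variable {S : Type}

/-- Binary trees over `S` with two node colours. -/
inductive PT (S : Type) : Type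
  | leaf (s : S)
  | ot (a b : PT S)
  | pa (a b : PT S)

namespace PT

/-- number of leaves -/
def size : PT S → ℕ
  | leaf _ => 1
  | ot a b => size a + size b
  | pa a b => size a + size b

lemma size_pos (X : PT S) : 0 < X.size := by
  induction X with
  | leaf s => simp [size]
  | ot a b iha ihb => simp [size]; omega
  | pa a b iha ihb => simp [size]; omega

/-- termination measure -/
def nu : PT S → ℕ
  | leaf _ => 2
  | ot a b => nu a * nu b + nu b
  | pa a b => nu a + 2 * nu b + 1

lemma nu_ge_two (X : PT S) : 2 ≤ X.nu := by
  induction X with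
  | leaf s => simp [nu]
  | ot a b iha ihb => simp [nu]; nlinarith
  | pa a b iha ihb => simp [nu]; omega

end PT

open PT

/-- Formal morphisms of the free (unitless) lax linearly distributive category. -/
inductive Hm : PT S → PT S → Type
  | id (X : PT S) : Hm X X
  | comp {X Y Z : PT S} : Hm X Y → Hm Y Z → Hm X Z
  | ot {X₁ Y₁ X₂ Y₂ : PT S} : Hm X₁ Y₁ → Hm X₂ Y₂ → Hm (X₁.ot X₂) (Y₁.ot Y₂)
  | pa {X₁ Y₁ X₂ Y₂ : PT S} : Hm X₁ Y₁ → Hm X₂ Y₂ → Hm (X₁.pa X₂) (Y₁.pa Y₂)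
  | al (A B C : PT S) : Hm (A.ot (B.ot C)) ((A.ot B).ot C)
  | pal (A B C : PT S) : Hm (A.pa (B.pa C)) ((A.pa B).pa C)
  | dl (A B C : PT S) : Hm (A.ot (B.pa C)) ((A.ot B).pa C)
  | dr (A B C : PT S) : Hm ((A.pa B).ot C) (A.pa (B.ot C))

namespace Hm

infixr:80 " ⋙' " => Hm.comp

/-- The congruence generated by the lax LD axioms. -/
inductive R : ∀ {X Y : PT S}, Hm X Y → Hm X Y → Prop
  | refl {X Y} (f : Hm X Y) : R f f
  | symm {X Y} {f g : Hm X Y} : R f g → R g f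
  | trans {X Y} {f g h : Hm X Y} : R f g → R g h → R f h
  | compCongr {X Y Z} {f f' : Hm X Y} {g g' : Hm Y Z} :
      R f f' → R g g' → R (f ⋙' g) (f' ⋙' g')
  | otCongr {X₁ Y₁ X₂ Y₂} {f f' : Hm X₁ Y₁} {g g' : Hm X₂ Y₂} :
      R f f' → R g g' → R (Hm.ot f g) (Hm.ot f' g')
  | paCongr {X₁ Y₁ X₂ Y₂} {f f' : Hm X₁ Y₁} {g g' : Hm X₂ Y₂} :
      R f f' → R g g' → R (Hm.pa f g) (Hm.pa f' g')
  | idComp {X Y} (f : Hm X Y) : R (Hm.id X ⋙' f) f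
  | compId {X Y} (f : Hm X Y) : R (f ⋙' Hm.id Y) f
  | assoc {W X Y Z} (f : Hm W X) (g : Hm X Y) (h : Hm Y Z) :
      R ((f ⋙' g) ⋙' h) (f ⋙' (g ⋙' h))
  | otId (X Y : PT S) : R (Hm.ot (Hm.id X) (Hm.id Y)) (Hm.id (X.ot Y))
  | otComp {X₁ Y₁ Z₁ X₂ Y₂ Z₂} (f₁ : Hm X₁ Y₁) (g₁ : Hm Y₁ Z₁) (f₂ : Hm X₂ Y₂) (g₂ : Hm Y₂ Z₂) :
      R (Hm.ot (f₁ ⋙' g₁) (f₂ ⋙' g₂)) (Hm.ot f₁ f₂ ⋙' Hm.ot g₁ g₂)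
  | paId (X Y : PT S) : R (Hm.pa (Hm.id X) (Hm.id Y)) (Hm.id (X.pa Y))
  | paComp {X₁ Y₁ Z₁ X₂ Y₂ Z₂} (f₁ : Hm X₁ Y₁) (g₁ : Hm Y₁ Z₁) (f₂ : Hm X₂ Y₂) (g₂ : Hm Y₂ Z₂) :
      R (Hm.pa (f₁ ⋙' g₁) (f₂ ⋙' g₂)) (Hm.pa f₁ f₂ ⋙' Hm.pa g₁ g₂)
  | natAl {A A' B B' C C'} (f : Hm A A') (g : Hm B B') (h : Hm C C') :
      R (Hm.ot f (Hm.ot g h) ⋙' al A' B' C') (al A B C ⋙' Hm.ot (Hm.ot f g) h)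
  | natPal {A A' B B' C C'} (f : Hm A A') (g : Hm B B') (h : Hm C C') :
      R (Hm.pa f (Hm.pa g h) ⋙' pal A' B' C') (pal A B C ⋙' Hm.pa (Hm.pa f g) h)
  | natDl {A A' B B' C C'} (f : Hm A A') (g : Hm B B') (h : Hm C C') :
      R (Hm.ot f (Hm.pa g h) ⋙' dl A' B' C') (dl A B C ⋙' Hm.pa (Hm.ot f g) h)
  | natDr {A A' B B' C C'} (f : Hm A A') (g : Hm B B') (h : Hm C C') :
      R (Hm.ot (Hm.pa f g) h ⋙' dr A' B' C') (dr A B C ⋙' Hm.pa f (Hm.ot g h))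
  | pent1 (A B C D : PT S) :
      R (al A B (C.ot D) ⋙' al (A.ot B) C D)
        (Hm.ot (Hm.id A) (al B C D) ⋙' (al A (B.ot C) D ⋙' Hm.ot (al A B C) (Hm.id D)))
  | pent2 (A B C D : PT S) :
      R (al A B (C.pa D) ⋙' dl (A.ot B) C D)
        (Hm.ot (Hm.id A) (dl B C D) ⋙' (dl A (B.ot C) D ⋙' Hm.pa (al A B C) (Hm.id D)))
  | pent3 (A B C D : PT S) :
      R (Hm.ot (Hm.id A) (dr B C D) ⋙' dl A B (C.ot D))
        (al A (B.pa C) D ⋙' (Hm.ot (dl A B C) (Hm.id D) ⋙' dr (A.ot B) C D))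
  | pent4 (A B C D : PT S) :
      R (dl A B (C.pa D) ⋙' pal (A.ot B) C D)
        (Hm.ot (Hm.id A) (pal B C D) ⋙' (dl A (B.pa C) D ⋙' Hm.pa (dl A B C) (Hm.id D)))
  | pent5 (A B C D : PT S) :
      R (dr A B (C.ot D) ⋙' Hm.pa (Hm.id A) (al B C D))
        (al (A.pa B) C D ⋙' (Hm.ot (dr A B C) (Hm.id D) ⋙' dr A (B.ot C) D))
  | pent6 (A B C D : PT S) :
      R (dl (A.pa B) C D ⋙' Hm.pa (dr A B C) (Hm.id D))
        (dr A B (C.pa D) ⋙' (Hm.pa (Hm.id A) (dl B C D) ⋙' pal A (B.ot C) D))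
  | pent7 (A B C D : PT S) :
      R (Hm.ot (pal A B C) (Hm.id D) ⋙' dr (A.pa B) C D)
        (dr A (B.pa C) D ⋙' (Hm.pa (Hm.id A) (dr B C D) ⋙' pal A B (C.ot D)))
  | pent8 (A B C D : PT S) :
      R (pal A B (C.pa D) ⋙' pal (A.pa B) C D)
        (Hm.pa (Hm.id A) (pal B C D) ⋙' (pal A (B.pa C) D ⋙' Hm.pa (pal A B C) (Hm.id D)))

infix:50 " ≈' " => R

instance : ∀ {X Y : PT S}, Trans (R (X := X) (Y := Y)) (R (X := X) (Y := Y)) (R (X := X) (Y := Y)) :=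
  ⟨R.trans⟩

namespace R

lemma compCongrL {X Y Z : PT S} {f f' : Hm X Y} (g : Hm Y Z) (h : R f f') :
    R (f ⋙' g) (f' ⋙' g) := R.compCongr h (R.refl g)

lemma compCongrR {X Y Z : PT S} (f : Hm X Y) {g g' : Hm Y Z} (h : R g g') :
    R (f ⋙' g) (f ⋙' g') := R.compCongr (R.refl f) h

/-- rebracketing tool: `(f ≫ g) ≫ h ≈ f ≫ (g ≫ h)` both directions come from assoc/symm -/
lemma assoc' {W X Y Z : PT S} (f : Hm W X) (g : Hm X Y) (h : Hm Y Z) :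
    R (f ⋙' (g ⋙' h)) ((f ⋙' g) ⋙' h) := R.symm (R.assoc f g h)

end R

end Hm
end Syn
end LaxLDCoherence

namespace LaxLDCoherence
namespace Syn

variable {S : Type}

open PT Hm

/-- single rewrite steps -/
inductive Step : PT S → PT S → Type
  | rAl (A B C : PT S) : Step (A.ot (B.ot C)) ((A.ot B).ot C)
  | rPal (A B C : PT S) : Step (A.pa (B.pa C)) ((A.pa B).pa C)
  | rDl (A B C : PT S) : Step (A.ot (B.pa C)) ((A.ot B).pa C)
  | rDr (A B C : PT S) : Step ((A.pa B).ot C) (A.pa (B.ot C))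
  | otL {A A' : PT S} (B : PT S) : Step A A' → Step (A.ot B) (A'.ot B)
  | otR (A : PT S) {B B' : PT S} : Step B B' → Step (A.ot B) (A.ot B')
  | paL {A A' : PT S} (B : PT S) : Step A A' → Step (A.pa B) (A'.pa B)
  | paR (A : PT S) {B B' : PT S} : Step B B' → Step (A.pa B) (A.pa B')

namespace Step

/-- the morphism term of a step -/
def tm : ∀ {X Y : PT S}, Step X Y → Hm X Y
  | _, _, rAl A B C => Hm.al A B C
  | _, _, rPal A B C => Hm.pal A B C
  | _, _, rDl A B C => Hm.dl A B C
  | _, _, rDr A B C => Hm.dr A B C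
  | _, _, otL B s => Hm.ot s.tm (Hm.id B)
  | _, _, otR A s => Hm.ot (Hm.id A) s.tm
  | _, _, paL B s => Hm.pa s.tm (Hm.id B)
  | _, _, paR A s => Hm.pa (Hm.id A) s.tm

lemma size_eq : ∀ {X Y : PT S}, Step X Y → Y.size = X.size := by
  intro X Y s
  induction s with
  | rAl A B C => simp [PT.size]; omega
  | rPal A B C => simp [PT.size]; omega
  | rDl A B C => simp [PT.size]; omega
  | rDr A B C => simp [PT.size]; omega
  | otL B s ih => simp [PT.size, ih]
  | otR A s ih => simp [PT.size, ih]
  | paL B s ih => simp [PT.size, ih]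
  | paR A s ih => simp [PT.size, ih]

lemma nu_lt : ∀ {X Y : PT S}, Step X Y → Y.nu < X.nu := by
  intro X Y s
  induction s with
  | rAl A B C =>
      have ha := A.nu_ge_two; have hb := B.nu_ge_two; have hc := C.nu_ge_two
      simp only [PT.nu]; nlinarith
  | rPal A B C =>
      have hc := C.nu_ge_two
      simp only [PT.nu]; omega
  | rDl A B C =>
      have ha := A.nu_ge_two; have hb := B.nu_ge_two; have hc := C.nu_ge_two
      simp only [PT.nu]; nlinarith
  | rDr A B C =>
      have ha := A.nu_ge_two; have hb := B.nu_ge_two; have hc := C.nu_ge_two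
      simp only [PT.nu]; nlinarith
  | otL B s ih =>
      have hb := B.nu_ge_two
      simp only [PT.nu]; nlinarith
  | otR A s ih =>
      have ha := A.nu_ge_two
      simp only [PT.nu]; nlinarith
  | paL B s ih => simp only [PT.nu]; omega
  | paR A s ih => simp only [PT.nu]; omega

end Step

lemma Hm.size_eq : ∀ {X Y : PT S}, Hm X Y → Y.size = X.size := by
  intro X Y f
  induction f with
  | id X => rfl
  | comp f g ihf ihg => omega
  | ot f g ihf ihg => simp [PT.size]; omega
  | pa f g ihf ihg => simp [PT.size]; omega
  | al A B C => simp [PT.size]; omega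
  | pal A B C => simp [PT.size]; omega
  | dl A B C => simp [PT.size]; omega
  | dr A B C => simp [PT.size]; omega

lemma Hm.nu_le : ∀ {X Y : PT S}, Hm X Y → Y.nu ≤ X.nu := by
  intro X Y f
  induction f with
  | id X => exact le_refl _
  | comp f g ihf ihg => omega
  | @ot X₁ Y₁ X₂ Y₂ f g ihf ihg =>
      simp only [PT.nu]
      nlinarith [PT.nu_ge_two X₁, PT.nu_ge_two X₂, PT.nu_ge_two Y₁, PT.nu_ge_two Y₂, ihf, ihg]
  | pa f g ihf ihg => simp only [PT.nu]; omega
  | al A B C => exact le_of_lt (Step.nu_lt (Step.rAl A B C))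
  | pal A B C => exact le_of_lt (Step.nu_lt (Step.rPal A B C))
  | dl A B C => exact le_of_lt (Step.nu_lt (Step.rDl A B C))
  | dr A B C => exact le_of_lt (Step.nu_lt (Step.rDr A B C))

/-- decomposition: every morphism is (≈) the identity or a step followed by a morphism. -/
theorem Hm.decomp : ∀ {X Y : PT S} (f : Hm X Y),
    (∃ h : X = Y, R f (h ▸ Hm.id X)) ∨
    (∃ (X' : PT S) (c : Step X X') (f' : Hm X' Y), R f (c.tm ⋙' f')) := by
  intro X Y f
  induction f with
  | id X => exact Or.inl ⟨rfl, R.refl _⟩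
  | comp f g ihf ihg =>
      rcases ihf with ⟨h, hf⟩ | ⟨X', c, f', hf⟩
      · subst h
        rcases ihg with ⟨h2, hg⟩ | ⟨X', c, g', hg⟩
        · subst h2
          exact Or.inl ⟨rfl, R.trans (R.compCongr hf hg) (R.idComp _)⟩
        · exact Or.inr ⟨X', c, g', R.trans (R.compCongr hf hg)
            (R.idComp _)⟩
      · exact Or.inr ⟨X', c, f' ⋙' g,
          R.trans (R.compCongrL g hf) (R.assoc _ _ _)⟩
  | ot f g ihf ihg =>
      rcases ihf with ⟨h, hf⟩ | ⟨X', c, f', hf⟩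
      · subst h
        rcases ihg with ⟨h2, hg⟩ | ⟨X', c, g', hg⟩
        · subst h2
          exact Or.inl ⟨rfl, R.trans (R.otCongr hf hg) (R.otId _ _)⟩
        · -- f ≈ id, g ≈ c ≫ g'
          refine Or.inr ⟨_, Step.otR _ c, Hm.ot (Hm.id _) g', ?_⟩
          calc Hm.ot f g ≈' Hm.ot (Hm.id _ ⋙' Hm.id _) (c.tm ⋙' g') :=
                R.otCongr (R.trans hf (R.symm (R.idComp _))) hg
            _ ≈' Hm.ot (Hm.id _) c.tm ⋙' Hm.ot (Hm.id _) g' := R.otComp _ _ _ _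
            _ = (Step.otR _ c).tm ⋙' Hm.ot (Hm.id _) g' := rfl
      · refine Or.inr ⟨_, Step.otL _ c, Hm.ot f' g, ?_⟩
        calc Hm.ot f g ≈' Hm.ot (c.tm ⋙' f') (Hm.id _ ⋙' g) :=
              R.otCongr hf (R.symm (R.idComp _))
          _ ≈' Hm.ot c.tm (Hm.id _) ⋙' Hm.ot f' g := R.otComp _ _ _ _
  | pa f g ihf ihg =>
      rcases ihf with ⟨h, hf⟩ | ⟨X', c, f', hf⟩
      · subst h
        rcases ihg with ⟨h2, hg⟩ | ⟨X', c, g', hg⟩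
        · subst h2
          exact Or.inl ⟨rfl, R.trans (R.paCongr hf hg) (R.paId _ _)⟩
        · refine Or.inr ⟨_, Step.paR _ c, Hm.pa (Hm.id _) g', ?_⟩
          calc Hm.pa f g ≈' Hm.pa (Hm.id _ ⋙' Hm.id _) (c.tm ⋙' g') :=
                R.paCongr (R.trans hf (R.symm (R.idComp _))) hg
            _ ≈' Hm.pa (Hm.id _) c.tm ⋙' Hm.pa (Hm.id _) g' := R.paComp _ _ _ _
      · refine Or.inr ⟨_, Step.paL _ c, Hm.pa f' g, ?_⟩
        calc Hm.pa f g ≈' Hm.pa (c.tm ⋙' f') (Hm.id _ ⋙' g) :=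
              R.paCongr hf (R.symm (R.idComp _))
          _ ≈' Hm.pa c.tm (Hm.id _) ⋙' Hm.pa f' g := R.paComp _ _ _ _
  | al A B C =>
      exact Or.inr ⟨_, Step.rAl A B C, Hm.id _, R.symm (R.compId _)⟩
  | pal A B C =>
      exact Or.inr ⟨_, Step.rPal A B C, Hm.id _, R.symm (R.compId _)⟩
  | dl A B C =>
      exact Or.inr ⟨_, Step.rDl A B C, Hm.id _, R.symm (R.compId _)⟩
  | dr A B C =>
      exact Or.inr ⟨_, Step.rDr A B C, Hm.id _, R.symm (R.compId _)⟩

end Syn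
end LaxLDCoherence

namespace LaxLDCoherence
namespace Syn

variable {S : Type}

open PT Hm

namespace Hm.R

lemma otSplitL {A A' B B' : PT S} (f : Hm A A') (g : Hm B B') :
    R (Hm.ot f g) (Hm.ot f (Hm.id B) ⋙' Hm.ot (Hm.id A') g) :=
  R.trans (R.otCongr (R.symm (R.compId f)) (R.symm (R.idComp g))) (R.otComp _ _ _ _)

lemma otSplitR {A A' B B' : PT S} (f : Hm A A') (g : Hm B B') :
    R (Hm.ot f g) (Hm.ot (Hm.id A) g ⋙' Hm.ot f (Hm.id B')) :=
  R.trans (R.otCongr (R.symm (R.idComp f)) (R.symm (R.compId g))) (R.otComp _ _ _ _)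

lemma paSplitL {A A' B B' : PT S} (f : Hm A A') (g : Hm B B') :
    R (Hm.pa f g) (Hm.pa f (Hm.id B) ⋙' Hm.pa (Hm.id A') g) :=
  R.trans (R.paCongr (R.symm (R.compId f)) (R.symm (R.idComp g))) (R.paComp _ _ _ _)

lemma paSplitR {A A' B B' : PT S} (f : Hm A A') (g : Hm B B') :
    R (Hm.pa f g) (Hm.pa (Hm.id A) g ⋙' Hm.pa f (Hm.id B')) :=
  R.trans (R.paCongr (R.symm (R.idComp f)) (R.symm (R.compId g))) (R.paComp _ _ _ _)

/-- merge a composite under ot on the right factor -/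
lemma otMergeR {A B B' B'' : PT S} (g : Hm B B') (g' : Hm B' B'') :
    R (Hm.ot (Hm.id A) g ⋙' Hm.ot (Hm.id A) g') (Hm.ot (Hm.id A) (g ⋙' g')) :=
  R.trans (R.symm (R.otComp _ _ _ _)) (R.otCongr (R.idComp _) (R.refl _))

lemma paMergeR {A B B' B'' : PT S} (g : Hm B B') (g' : Hm B' B'') :
    R (Hm.pa (Hm.id A) g ⋙' Hm.pa (Hm.id A) g') (Hm.pa (Hm.id A) (g ⋙' g')) :=
  R.trans (R.symm (R.paComp _ _ _ _)) (R.paCongr (R.idComp _) (R.refl _))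

end Hm.R

section Shape

/-- no morphism from a `pa`-rooted tree to an `ot`-rooted tree -/
lemma no_pa_to_ot : ∀ (k : ℕ) {A B C D : PT S} (_ : Hm (A.pa B) (C.ot D)),
    (A.pa B).nu ≤ k → False := by
  intro k
  induction k with
  | zero => intro A B C D f hk; have := PT.nu_ge_two (A.pa B); omega
  | succ k ih =>
      intro A B C D f hk
      rcases f.decomp with ⟨h, -⟩ | ⟨X', c, f', -⟩
      · exact nomatch h
      · have hnu := c.nu_lt
        cases c with
        | rPal A B C => exact ih f' (by omega)
        | paL B s => exact ih f' (by omega)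
        | paR A s => exact ih f' (by omega)

/-- boundary monotonicity for ot-rooted morphisms -/
lemma bnd_mono_ot : ∀ (k : ℕ) {A B C D : PT S} (_ : Hm (A.ot B) (C.ot D)),
    (A.ot B).nu ≤ k → A.size ≤ C.size := by
  intro k
  induction k with
  | zero => intro A B C D f hk; have := PT.nu_ge_two (A.ot B); omega
  | succ k ih =>
      intro A B C D f hk
      rcases f.decomp with ⟨h, -⟩ | ⟨X', c, f', -⟩
      · cases h; exact le_refl _
      · have hnu := c.nu_lt
        cases c with
        | rAl A B₁ B₂ =>
            have h2 := ih f' (by omega)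
            have : A.size ≤ (A.ot B₁).size := by simp [PT.size]
            omega
        | rDl A B₁ B₂ => exact (no_pa_to_ot _ f' (le_refl _)).elim
        | rDr A₁ A₂ B => exact (no_pa_to_ot _ f' (le_refl _)).elim
        | otL B s =>
            have h2 := ih f' (by omega)
            have := s.size_eq
            omega
        | otR A s => exact ih f' (by omega)

/-- boundary monotonicity for pa-rooted morphisms -/
lemma bnd_mono_pa : ∀ (k : ℕ) {A B C D : PT S} (_ : Hm (A.pa B) (C.pa D)),
    (A.pa B).nu ≤ k → A.size ≤ C.size := by
  intro k
  induction k with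
  | zero => intro A B C D f hk; have := PT.nu_ge_two (A.pa B); omega
  | succ k ih =>
      intro A B C D f hk
      rcases f.decomp with ⟨h, -⟩ | ⟨X', c, f', -⟩
      · cases h; exact le_refl _
      · have hnu := c.nu_lt
        cases c with
        | rPal A B₁ B₂ =>
            have h2 := ih f' (by omega)
            have : A.size ≤ (A.pa B₁).size := by simp [PT.size]
            omega
        | paL B s =>
            have h2 := ih f' (by omega)
            have := s.size_eq
            omega
        | paR A s => exact ih f' (by omega)

end Shape

section Prod

/-- same-boundary ot-to-ot morphisms split as products -/
lemma prod_ot : ∀ (k : ℕ) {X₁ X₂ Y₁ Y₂ : PT S} (f : Hm (X₁.ot X₂) (Y₁.ot Y₂)),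
    X₁.size = Y₁.size → (X₁.ot X₂).nu ≤ k →
    ∃ (u : Hm X₁ Y₁) (v : Hm X₂ Y₂), R f (Hm.ot u v) := by
  intro k
  induction k with
  | zero => intro X₁ X₂ Y₁ Y₂ f hs hk; have := PT.nu_ge_two (X₁.ot X₂); omega
  | succ k ih =>
      intro X₁ X₂ Y₁ Y₂ f hs hk
      rcases f.decomp with ⟨h, hf⟩ | ⟨X', c, f', hf⟩
      · injection h with h1 h2
        subst h1; subst h2
        exact ⟨Hm.id _, Hm.id _, R.trans hf (R.symm (R.otId _ _))⟩
      · have hnu := c.nu_lt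
        cases c with
        | rAl A B₁ B₂ =>
            -- boundary grows: contradiction
            have h2 := bnd_mono_ot _ f' (le_refl _)
            have hb := PT.size_pos B₁
            simp [PT.size] at h2
            omega
        | rDl A B₁ B₂ => exact (no_pa_to_ot _ f' (le_refl _)).elim
        | rDr A₁ A₂ B => exact (no_pa_to_ot _ f' (le_refl _)).elim
        | @otL _ A' _ s =>
            have hs' : A'.size = Y₁.size := by
              have := s.size_eq; omega
            obtain ⟨u, v, huv⟩ := ih f' hs' (by omega)
            refine ⟨s.tm ⋙' u, Hm.id _ ⋙' v,
              R.trans hf (R.trans (R.compCongrR _ huv) (R.symm (R.otComp _ _ _ _)))⟩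
        | otR A s =>
            obtain ⟨u, v, huv⟩ := ih f' hs (by omega)
            refine ⟨Hm.id _ ⋙' u, s.tm ⋙' v,
              R.trans hf (R.trans (R.compCongrR _ huv) (R.symm (R.otComp _ _ _ _)))⟩

/-- same-boundary pa-to-pa morphisms split as products -/
lemma prod_pa : ∀ (k : ℕ) {X₁ X₂ Y₁ Y₂ : PT S} (f : Hm (X₁.pa X₂) (Y₁.pa Y₂)),
    X₁.size = Y₁.size → (X₁.pa X₂).nu ≤ k →
    ∃ (u : Hm X₁ Y₁) (v : Hm X₂ Y₂), R f (Hm.pa u v) := by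
  intro k
  induction k with
  | zero => intro X₁ X₂ Y₁ Y₂ f hs hk; have := PT.nu_ge_two (X₁.pa X₂); omega
  | succ k ih =>
      intro X₁ X₂ Y₁ Y₂ f hs hk
      rcases f.decomp with ⟨h, hf⟩ | ⟨X', c, f', hf⟩
      · injection h with h1 h2
        subst h1; subst h2
        exact ⟨Hm.id _, Hm.id _, R.trans hf (R.symm (R.paId _ _))⟩
      · have hnu := c.nu_lt
        cases c with
        | rPal A B₁ B₂ =>
            have h2 := bnd_mono_pa _ f' (le_refl _)
            have hb := PT.size_pos B₁
            simp [PT.size] at h2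
            omega
        | @paL _ A' _ s =>
            have hs' : A'.size = Y₁.size := by
              have := s.size_eq; omega
            obtain ⟨u, v, huv⟩ := ih f' hs' (by omega)
            refine ⟨s.tm ⋙' u, Hm.id _ ⋙' v,
              R.trans hf (R.trans (R.compCongrR _ huv) (R.symm (R.paComp _ _ _ _)))⟩
        | paR A s =>
            obtain ⟨u, v, huv⟩ := ih f' hs (by omega)
            refine ⟨Hm.id _ ⋙' u, s.tm ⋙' v,
              R.trans hf (R.trans (R.compCongrR _ huv) (R.symm (R.paComp _ _ _ _)))⟩

end Prod

end Syn
end LaxLDCoherence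

namespace LaxLDCoherence
namespace Syn

variable {S : Type}

open PT Hm

namespace Hm.R

lemma otExch {A A' B B' : PT S} (f : Hm A A') (g : Hm B B') :
    R (Hm.ot f (Hm.id B) ⋙' Hm.ot (Hm.id A') g) (Hm.ot (Hm.id A) g ⋙' Hm.ot f (Hm.id B')) :=
  R.trans (R.symm (otSplitL f g)) (otSplitR f g)

lemma paExch {A A' B B' : PT S} (f : Hm A A') (g : Hm B B') :
    R (Hm.pa f (Hm.id B) ⋙' Hm.pa (Hm.id A') g) (Hm.pa (Hm.id A) g ⋙' Hm.pa f (Hm.id B')) :=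
  R.trans (R.symm (paSplitL f g)) (paSplitR f g)

end Hm.R

/-- standardization for ot-rooted morphisms that strictly move the boundary -/
lemma std_ot : ∀ (k : ℕ) {X₁ X₂ Y₁ Y₂ : PT S} (f : Hm (X₁.ot X₂) (Y₁.ot Y₂)),
    X₁.size < Y₁.size → (X₁.ot X₂).nu ≤ k →
    ∃ (U V : PT S) (w : Hm X₂ (U.ot V)) (v : Hm (X₁.ot U) Y₁) (v' : Hm V Y₂),
      R f (Hm.ot (Hm.id X₁) w ⋙' (Hm.al X₁ U V ⋙' Hm.ot v v')) := by
  intro k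
  induction k with
  | zero =>
      intro X₁ X₂ Y₁ Y₂ f hs hk
      exact absurd hk (by have := PT.nu_ge_two (X₁.ot X₂); omega)
  | succ k ih =>
      intro X₁ X₂ Y₁ Y₂ f hs hk
      rcases f.decomp with ⟨h, hf⟩ | ⟨X', c, f', hf⟩
      · injection h with h1 h2; subst h1; omega
      · have hnu := c.nu_lt
        cases c with
        | @otL _ A' _ s =>
            have hs' : A'.size < Y₁.size := by have := s.size_eq; omega
            obtain ⟨U, V, w, v, v', hstd⟩ := ih f' hs' (by omega)
            refine ⟨U, V, w, Hm.ot s.tm (Hm.id U) ⋙' v, v', ?_⟩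
            refine R.trans hf (R.trans (R.compCongrR _ hstd) ?_)
            calc Hm.ot s.tm (Hm.id X₂) ⋙' (Hm.ot (Hm.id A') w ⋙' (Hm.al A' U V ⋙' Hm.ot v v'))
                ≈' (Hm.ot s.tm (Hm.id X₂) ⋙' Hm.ot (Hm.id A') w) ⋙' (Hm.al A' U V ⋙' Hm.ot v v') :=
                  R.assoc' _ _ _
              _ ≈' (Hm.ot (Hm.id X₁) w ⋙' Hm.ot s.tm (Hm.id (U.ot V))) ⋙' (Hm.al A' U V ⋙' Hm.ot v v') :=
                  R.compCongrL _ (R.otExch s.tm w)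
              _ ≈' Hm.ot (Hm.id X₁) w ⋙' (Hm.ot s.tm (Hm.id (U.ot V)) ⋙' (Hm.al A' U V ⋙' Hm.ot v v')) :=
                  R.assoc _ _ _
              _ ≈' Hm.ot (Hm.id X₁) w ⋙' ((Hm.ot s.tm (Hm.id (U.ot V)) ⋙' Hm.al A' U V) ⋙' Hm.ot v v') :=
                  R.compCongrR _ (R.assoc' _ _ _)
              _ ≈' Hm.ot (Hm.id X₁) w ⋙' ((Hm.ot s.tm (Hm.ot (Hm.id U) (Hm.id V)) ⋙' Hm.al A' U V) ⋙' Hm.ot v v') :=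
                  R.compCongrR _ (R.compCongrL _ (R.compCongrL _
                    (R.otCongr (R.refl _) (R.symm (R.otId U V)))))
              _ ≈' Hm.ot (Hm.id X₁) w ⋙' ((Hm.al X₁ U V ⋙' Hm.ot (Hm.ot s.tm (Hm.id U)) (Hm.id V)) ⋙' Hm.ot v v') :=
                  R.compCongrR _ (R.compCongrL _ (R.natAl s.tm (Hm.id U) (Hm.id V)))
              _ ≈' Hm.ot (Hm.id X₁) w ⋙' (Hm.al X₁ U V ⋙' (Hm.ot (Hm.ot s.tm (Hm.id U)) (Hm.id V) ⋙' Hm.ot v v')) :=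
                  R.compCongrR _ (R.assoc _ _ _)
              _ ≈' Hm.ot (Hm.id X₁) w ⋙' (Hm.al X₁ U V ⋙' Hm.ot (Hm.ot s.tm (Hm.id U) ⋙' v) (Hm.id V ⋙' v')) :=
                  R.compCongrR _ (R.compCongrR _ (R.symm (R.otComp _ _ _ _)))
              _ ≈' Hm.ot (Hm.id X₁) w ⋙' (Hm.al X₁ U V ⋙' Hm.ot (Hm.ot s.tm (Hm.id U) ⋙' v) v') :=
                  R.compCongrR _ (R.compCongrR _ (R.otCongr (R.refl _) (R.idComp _)))
        | @otR _ _ B' s =>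
            obtain ⟨U, V, w, v, v', hstd⟩ := ih f' hs (by omega)
            refine ⟨U, V, s.tm ⋙' w, v, v', ?_⟩
            refine R.trans hf (R.trans (R.compCongrR _ hstd) ?_)
            calc Hm.ot (Hm.id X₁) s.tm ⋙' (Hm.ot (Hm.id X₁) w ⋙' (Hm.al X₁ U V ⋙' Hm.ot v v'))
                ≈' (Hm.ot (Hm.id X₁) s.tm ⋙' Hm.ot (Hm.id X₁) w) ⋙' (Hm.al X₁ U V ⋙' Hm.ot v v') :=
                  R.assoc' _ _ _
              _ ≈' Hm.ot (Hm.id X₁) (s.tm ⋙' w) ⋙' (Hm.al X₁ U V ⋙' Hm.ot v v') :=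
                  R.compCongrL _ (R.otMergeR _ _)
        | rAl _ B₁ B₂ =>
            have hb : (X₁.ot B₁).size ≤ Y₁.size := bnd_mono_ot _ f' (le_refl _)
            rcases Nat.lt_or_ge (X₁.ot B₁).size Y₁.size with hlt | hge
            · obtain ⟨U, V, w0, v0, v0', hstd⟩ := ih f' hlt (by omega)
              refine ⟨B₁.ot U, V, Hm.ot (Hm.id B₁) w0 ⋙' Hm.al B₁ U V,
                Hm.al X₁ B₁ U ⋙' v0, v0', ?_⟩
              refine R.trans hf (R.trans (R.compCongrR _ hstd) ?_)
              calc Hm.al X₁ B₁ B₂ ⋙' (Hm.ot (Hm.id (X₁.ot B₁)) w0 ⋙' (Hm.al (X₁.ot B₁) U V ⋙' Hm.ot v0 v0'))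
                  ≈' (Hm.al X₁ B₁ B₂ ⋙' Hm.ot (Hm.id (X₁.ot B₁)) w0) ⋙' (Hm.al (X₁.ot B₁) U V ⋙' Hm.ot v0 v0') :=
                    R.assoc' _ _ _
                _ ≈' (Hm.al X₁ B₁ B₂ ⋙' Hm.ot (Hm.ot (Hm.id X₁) (Hm.id B₁)) w0) ⋙' (Hm.al (X₁.ot B₁) U V ⋙' Hm.ot v0 v0') :=
                    R.compCongrL _ (R.compCongrR _ (R.otCongr (R.symm (R.otId _ _)) (R.refl _)))
                _ ≈' (Hm.ot (Hm.id X₁) (Hm.ot (Hm.id B₁) w0) ⋙' Hm.al X₁ B₁ (U.ot V)) ⋙' (Hm.al (X₁.ot B₁) U V ⋙' Hm.ot v0 v0') :=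
                    R.compCongrL _ (R.symm (R.natAl (Hm.id X₁) (Hm.id B₁) w0))
                _ ≈' Hm.ot (Hm.id X₁) (Hm.ot (Hm.id B₁) w0) ⋙' (Hm.al X₁ B₁ (U.ot V) ⋙' (Hm.al (X₁.ot B₁) U V ⋙' Hm.ot v0 v0')) :=
                    R.assoc _ _ _
                _ ≈' Hm.ot (Hm.id X₁) (Hm.ot (Hm.id B₁) w0) ⋙' ((Hm.al X₁ B₁ (U.ot V) ⋙' Hm.al (X₁.ot B₁) U V) ⋙' Hm.ot v0 v0') :=
                    R.compCongrR _ (R.assoc' _ _ _)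
                _ ≈' Hm.ot (Hm.id X₁) (Hm.ot (Hm.id B₁) w0) ⋙' ((Hm.ot (Hm.id X₁) (Hm.al B₁ U V) ⋙' (Hm.al X₁ (B₁.ot U) V ⋙' Hm.ot (Hm.al X₁ B₁ U) (Hm.id V))) ⋙' Hm.ot v0 v0') :=
                    R.compCongrR _ (R.compCongrL _ (R.pent1 X₁ B₁ U V))
                _ ≈' Hm.ot (Hm.id X₁) (Hm.ot (Hm.id B₁) w0) ⋙' (Hm.ot (Hm.id X₁) (Hm.al B₁ U V) ⋙' ((Hm.al X₁ (B₁.ot U) V ⋙' Hm.ot (Hm.al X₁ B₁ U) (Hm.id V)) ⋙' Hm.ot v0 v0')) :=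
                    R.compCongrR _ (R.assoc _ _ _)
                _ ≈' (Hm.ot (Hm.id X₁) (Hm.ot (Hm.id B₁) w0) ⋙' Hm.ot (Hm.id X₁) (Hm.al B₁ U V)) ⋙' ((Hm.al X₁ (B₁.ot U) V ⋙' Hm.ot (Hm.al X₁ B₁ U) (Hm.id V)) ⋙' Hm.ot v0 v0') :=
                    R.assoc' _ _ _
                _ ≈' Hm.ot (Hm.id X₁) (Hm.ot (Hm.id B₁) w0 ⋙' Hm.al B₁ U V) ⋙' ((Hm.al X₁ (B₁.ot U) V ⋙' Hm.ot (Hm.al X₁ B₁ U) (Hm.id V)) ⋙' Hm.ot v0 v0') :=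
                    R.compCongrL _ (R.otMergeR _ _)
                _ ≈' Hm.ot (Hm.id X₁) (Hm.ot (Hm.id B₁) w0 ⋙' Hm.al B₁ U V) ⋙' (Hm.al X₁ (B₁.ot U) V ⋙' (Hm.ot (Hm.al X₁ B₁ U) (Hm.id V) ⋙' Hm.ot v0 v0')) :=
                    R.compCongrR _ (R.assoc _ _ _)
                _ ≈' Hm.ot (Hm.id X₁) (Hm.ot (Hm.id B₁) w0 ⋙' Hm.al B₁ U V) ⋙' (Hm.al X₁ (B₁.ot U) V ⋙' Hm.ot (Hm.al X₁ B₁ U ⋙' v0) (Hm.id V ⋙' v0')) :=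
                    R.compCongrR _ (R.compCongrR _ (R.symm (R.otComp _ _ _ _)))
                _ ≈' Hm.ot (Hm.id X₁) (Hm.ot (Hm.id B₁) w0 ⋙' Hm.al B₁ U V) ⋙' (Hm.al X₁ (B₁.ot U) V ⋙' Hm.ot (Hm.al X₁ B₁ U ⋙' v0) v0') :=
                    R.compCongrR _ (R.compCongrR _ (R.otCongr (R.refl _) (R.idComp _)))
            · have heq : (X₁.ot B₁).size = Y₁.size := le_antisymm hb hge
              obtain ⟨v, v', hvv⟩ := prod_ot _ f' heq (le_refl _)
              refine ⟨B₁, B₂, Hm.id _, v, v', ?_⟩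
              refine R.trans hf (R.trans (R.compCongrR _ hvv) ?_)
              calc Hm.al X₁ B₁ B₂ ⋙' Hm.ot v v'
                  ≈' Hm.id _ ⋙' (Hm.al X₁ B₁ B₂ ⋙' Hm.ot v v') := R.symm (R.idComp _)
                _ ≈' Hm.ot (Hm.id X₁) (Hm.id (B₁.ot B₂)) ⋙' (Hm.al X₁ B₁ B₂ ⋙' Hm.ot v v') :=
                    R.compCongrL _ (R.symm (R.otId _ _))
        | rDl _ B₁ B₂ => exact (no_pa_to_ot _ f' (le_refl _)).elim
        | rDr A₁ A₂ _ => exact (no_pa_to_ot _ f' (le_refl _)).elim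

end Syn
end LaxLDCoherence

namespace LaxLDCoherence
namespace Syn

variable {S : Type}

open PT Hm

/-- standardization for pa-rooted morphisms that strictly move the boundary -/
lemma std_pa : ∀ (k : ℕ) {X₁ X₂ Y₁ Y₂ : PT S} (f : Hm (X₁.pa X₂) (Y₁.pa Y₂)),
    X₁.size < Y₁.size → (X₁.pa X₂).nu ≤ k →
    ∃ (U V : PT S) (w : Hm X₂ (U.pa V)) (v : Hm (X₁.pa U) Y₁) (v' : Hm V Y₂),
      R f (Hm.pa (Hm.id X₁) w ⋙' (Hm.pal X₁ U V ⋙' Hm.pa v v')) := by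
  intro k
  induction k with
  | zero =>
      intro X₁ X₂ Y₁ Y₂ f hs hk
      exact absurd hk (by have := PT.nu_ge_two (X₁.pa X₂); omega)
  | succ k ih =>
      intro X₁ X₂ Y₁ Y₂ f hs hk
      rcases f.decomp with ⟨h, hf⟩ | ⟨X', c, f', hf⟩
      · injection h with h1 h2; subst h1; omega
      · have hnu := c.nu_lt
        cases c with
        | @paL _ A' _ s =>
            have hs' : A'.size < Y₁.size := by have := s.size_eq; omega
            obtain ⟨U, V, w, v, v', hstd⟩ := ih f' hs' (by omega)
            refine ⟨U, V, w, Hm.pa s.tm (Hm.id U) ⋙' v, v', ?_⟩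
            refine R.trans hf (R.trans (R.compCongrR _ hstd) ?_)
            calc Hm.pa s.tm (Hm.id X₂) ⋙' (Hm.pa (Hm.id A') w ⋙' (Hm.pal A' U V ⋙' Hm.pa v v'))
                ≈' (Hm.pa s.tm (Hm.id X₂) ⋙' Hm.pa (Hm.id A') w) ⋙' (Hm.pal A' U V ⋙' Hm.pa v v') :=
                  R.assoc' _ _ _
              _ ≈' (Hm.pa (Hm.id X₁) w ⋙' Hm.pa s.tm (Hm.id (U.pa V))) ⋙' (Hm.pal A' U V ⋙' Hm.pa v v') :=
                  R.compCongrL _ (R.paExch s.tm w)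
              _ ≈' Hm.pa (Hm.id X₁) w ⋙' (Hm.pa s.tm (Hm.id (U.pa V)) ⋙' (Hm.pal A' U V ⋙' Hm.pa v v')) :=
                  R.assoc _ _ _
              _ ≈' Hm.pa (Hm.id X₁) w ⋙' ((Hm.pa s.tm (Hm.id (U.pa V)) ⋙' Hm.pal A' U V) ⋙' Hm.pa v v') :=
                  R.compCongrR _ (R.assoc' _ _ _)
              _ ≈' Hm.pa (Hm.id X₁) w ⋙' ((Hm.pa s.tm (Hm.pa (Hm.id U) (Hm.id V)) ⋙' Hm.pal A' U V) ⋙' Hm.pa v v') :=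
                  R.compCongrR _ (R.compCongrL _ (R.compCongrL _
                    (R.paCongr (R.refl _) (R.symm (R.paId U V)))))
              _ ≈' Hm.pa (Hm.id X₁) w ⋙' ((Hm.pal X₁ U V ⋙' Hm.pa (Hm.pa s.tm (Hm.id U)) (Hm.id V)) ⋙' Hm.pa v v') :=
                  R.compCongrR _ (R.compCongrL _ (R.natPal s.tm (Hm.id U) (Hm.id V)))
              _ ≈' Hm.pa (Hm.id X₁) w ⋙' (Hm.pal X₁ U V ⋙' (Hm.pa (Hm.pa s.tm (Hm.id U)) (Hm.id V) ⋙' Hm.pa v v')) :=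
                  R.compCongrR _ (R.assoc _ _ _)
              _ ≈' Hm.pa (Hm.id X₁) w ⋙' (Hm.pal X₁ U V ⋙' Hm.pa (Hm.pa s.tm (Hm.id U) ⋙' v) (Hm.id V ⋙' v')) :=
                  R.compCongrR _ (R.compCongrR _ (R.symm (R.paComp _ _ _ _)))
              _ ≈' Hm.pa (Hm.id X₁) w ⋙' (Hm.pal X₁ U V ⋙' Hm.pa (Hm.pa s.tm (Hm.id U) ⋙' v) v') :=
                  R.compCongrR _ (R.compCongrR _ (R.paCongr (R.refl _) (R.idComp _)))
        | @paR _ _ B' s =>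
            obtain ⟨U, V, w, v, v', hstd⟩ := ih f' hs (by omega)
            refine ⟨U, V, s.tm ⋙' w, v, v', ?_⟩
            refine R.trans hf (R.trans (R.compCongrR _ hstd) ?_)
            calc Hm.pa (Hm.id X₁) s.tm ⋙' (Hm.pa (Hm.id X₁) w ⋙' (Hm.pal X₁ U V ⋙' Hm.pa v v'))
                ≈' (Hm.pa (Hm.id X₁) s.tm ⋙' Hm.pa (Hm.id X₁) w) ⋙' (Hm.pal X₁ U V ⋙' Hm.pa v v') :=
                  R.assoc' _ _ _
              _ ≈' Hm.pa (Hm.id X₁) (s.tm ⋙' w) ⋙' (Hm.pal X₁ U V ⋙' Hm.pa v v') :=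
                  R.compCongrL _ (R.paMergeR _ _)
        | rPal _ B₁ B₂ =>
            have hb : (X₁.pa B₁).size ≤ Y₁.size := bnd_mono_pa _ f' (le_refl _)
            rcases Nat.lt_or_ge (X₁.pa B₁).size Y₁.size with hlt | hge
            · obtain ⟨U, V, w0, v0, v0', hstd⟩ := ih f' hlt (by omega)
              refine ⟨B₁.pa U, V, Hm.pa (Hm.id B₁) w0 ⋙' Hm.pal B₁ U V,
                Hm.pal X₁ B₁ U ⋙' v0, v0', ?_⟩
              refine R.trans hf (R.trans (R.compCongrR _ hstd) ?_)
              calc Hm.pal X₁ B₁ B₂ ⋙' (Hm.pa (Hm.id (X₁.pa B₁)) w0 ⋙' (Hm.pal (X₁.pa B₁) U V ⋙' Hm.pa v0 v0'))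
                  ≈' (Hm.pal X₁ B₁ B₂ ⋙' Hm.pa (Hm.id (X₁.pa B₁)) w0) ⋙' (Hm.pal (X₁.pa B₁) U V ⋙' Hm.pa v0 v0') :=
                    R.assoc' _ _ _
                _ ≈' (Hm.pal X₁ B₁ B₂ ⋙' Hm.pa (Hm.pa (Hm.id X₁) (Hm.id B₁)) w0) ⋙' (Hm.pal (X₁.pa B₁) U V ⋙' Hm.pa v0 v0') :=
                    R.compCongrL _ (R.compCongrR _ (R.paCongr (R.symm (R.paId _ _)) (R.refl _)))
                _ ≈' (Hm.pa (Hm.id X₁) (Hm.pa (Hm.id B₁) w0) ⋙' Hm.pal X₁ B₁ (U.pa V)) ⋙' (Hm.pal (X₁.pa B₁) U V ⋙' Hm.pa v0 v0') :=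
                    R.compCongrL _ (R.symm (R.natPal (Hm.id X₁) (Hm.id B₁) w0))
                _ ≈' Hm.pa (Hm.id X₁) (Hm.pa (Hm.id B₁) w0) ⋙' (Hm.pal X₁ B₁ (U.pa V) ⋙' (Hm.pal (X₁.pa B₁) U V ⋙' Hm.pa v0 v0')) :=
                    R.assoc _ _ _
                _ ≈' Hm.pa (Hm.id X₁) (Hm.pa (Hm.id B₁) w0) ⋙' ((Hm.pal X₁ B₁ (U.pa V) ⋙' Hm.pal (X₁.pa B₁) U V) ⋙' Hm.pa v0 v0') :=
                    R.compCongrR _ (R.assoc' _ _ _)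
                _ ≈' Hm.pa (Hm.id X₁) (Hm.pa (Hm.id B₁) w0) ⋙' ((Hm.pa (Hm.id X₁) (Hm.pal B₁ U V) ⋙' (Hm.pal X₁ (B₁.pa U) V ⋙' Hm.pa (Hm.pal X₁ B₁ U) (Hm.id V))) ⋙' Hm.pa v0 v0') :=
                    R.compCongrR _ (R.compCongrL _ (R.pent8 X₁ B₁ U V))
                _ ≈' Hm.pa (Hm.id X₁) (Hm.pa (Hm.id B₁) w0) ⋙' (Hm.pa (Hm.id X₁) (Hm.pal B₁ U V) ⋙' ((Hm.pal X₁ (B₁.pa U) V ⋙' Hm.pa (Hm.pal X₁ B₁ U) (Hm.id V)) ⋙' Hm.pa v0 v0')) :=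
                    R.compCongrR _ (R.assoc _ _ _)
                _ ≈' (Hm.pa (Hm.id X₁) (Hm.pa (Hm.id B₁) w0) ⋙' Hm.pa (Hm.id X₁) (Hm.pal B₁ U V)) ⋙' ((Hm.pal X₁ (B₁.pa U) V ⋙' Hm.pa (Hm.pal X₁ B₁ U) (Hm.id V)) ⋙' Hm.pa v0 v0') :=
                    R.assoc' _ _ _
                _ ≈' Hm.pa (Hm.id X₁) (Hm.pa (Hm.id B₁) w0 ⋙' Hm.pal B₁ U V) ⋙' ((Hm.pal X₁ (B₁.pa U) V ⋙' Hm.pa (Hm.pal X₁ B₁ U) (Hm.id V)) ⋙' Hm.pa v0 v0') :=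
                    R.compCongrL _ (R.paMergeR _ _)
                _ ≈' Hm.pa (Hm.id X₁) (Hm.pa (Hm.id B₁) w0 ⋙' Hm.pal B₁ U V) ⋙' (Hm.pal X₁ (B₁.pa U) V ⋙' (Hm.pa (Hm.pal X₁ B₁ U) (Hm.id V) ⋙' Hm.pa v0 v0')) :=
                    R.compCongrR _ (R.assoc _ _ _)
                _ ≈' Hm.pa (Hm.id X₁) (Hm.pa (Hm.id B₁) w0 ⋙' Hm.pal B₁ U V) ⋙' (Hm.pal X₁ (B₁.pa U) V ⋙' Hm.pa (Hm.pal X₁ B₁ U ⋙' v0) (Hm.id V ⋙' v0')) :=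
                    R.compCongrR _ (R.compCongrR _ (R.symm (R.paComp _ _ _ _)))
                _ ≈' Hm.pa (Hm.id X₁) (Hm.pa (Hm.id B₁) w0 ⋙' Hm.pal B₁ U V) ⋙' (Hm.pal X₁ (B₁.pa U) V ⋙' Hm.pa (Hm.pal X₁ B₁ U ⋙' v0) v0') :=
                    R.compCongrR _ (R.compCongrR _ (R.paCongr (R.refl _) (R.idComp _)))
            · have heq : (X₁.pa B₁).size = Y₁.size := le_antisymm hb hge
              obtain ⟨v, v', hvv⟩ := prod_pa _ f' heq (le_refl _)
              refine ⟨B₁, B₂, Hm.id _, v, v', ?_⟩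
              refine R.trans hf (R.trans (R.compCongrR _ hvv) ?_)
              calc Hm.pal X₁ B₁ B₂ ⋙' Hm.pa v v'
                  ≈' Hm.id _ ⋙' (Hm.pal X₁ B₁ B₂ ⋙' Hm.pa v v') := R.symm (R.idComp _)
                _ ≈' Hm.pa (Hm.id X₁) (Hm.id (B₁.pa B₂)) ⋙' (Hm.pal X₁ B₁ B₂ ⋙' Hm.pa v v') :=
                    R.compCongrL _ (R.symm (R.paId _ _))


end Syn
end LaxLDCoherence

namespace LaxLDCoherence
namespace Syn

variable {S : Type}

open PT Hm

namespace Hm.R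

/-- add a trailing identity `pa 𝟙 𝟙` -/
lemma addPaId {X A B : PT S} (f : Hm X (A.pa B)) :
    R f (f ⋙' Hm.pa (Hm.id A) (Hm.id B)) :=
  R.trans (R.symm (R.compId f)) (R.compCongrR _ (R.symm (R.paId A B)))

/-- general exchange through `ot` -/
lemma otExch' {A A' B B' : PT S} (f : Hm A A') (g : Hm B B') :
    R (Hm.ot (Hm.id A) g ⋙' Hm.ot f (Hm.id B')) (Hm.ot f (Hm.id B) ⋙' Hm.ot (Hm.id A') g) :=
  R.symm (otExch f g)

lemma paExch' {A A' B B' : PT S} (f : Hm A A') (g : Hm B B') :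
    R (Hm.pa (Hm.id A) g ⋙' Hm.pa f (Hm.id B')) (Hm.pa f (Hm.id B) ⋙' Hm.pa (Hm.id A') g) :=
  R.symm (paExch f g)

lemma otSplitCompL {A B B' B'' : PT S} (g : Hm B B') (g' : Hm B' B'') :
    R (Hm.ot (g ⋙' g') (Hm.id A)) (Hm.ot g (Hm.id A) ⋙' Hm.ot g' (Hm.id A)) :=
  R.trans (R.otCongr (R.refl _) (R.symm (R.idComp _))) (R.otComp _ _ _ _)

lemma paSplitCompL {A B B' B'' : PT S} (g : Hm B B') (g' : Hm B' B'') :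
    R (Hm.pa (g ⋙' g') (Hm.id A)) (Hm.pa g (Hm.id A) ⋙' Hm.pa g' (Hm.id A)) :=
  R.trans (R.paCongr (R.refl _) (R.symm (R.idComp _))) (R.paComp _ _ _ _)

section ChainLemmas

variable {A A' B B' C C₁ C₂ D : PT S}

/-- natPal-left chain : `c = paL`, `D' = paR` -/
lemma chainPalL (f : Hm A A') (w : Hm B (C₁.pa D)) :
    R (Hm.pa f (Hm.id B) ⋙' (Hm.pa (Hm.id A') w ⋙' Hm.pal A' C₁ D))
      ((Hm.pa (Hm.id A) w ⋙' Hm.pal A C₁ D) ⋙' Hm.pa (Hm.pa f (Hm.id C₁)) (Hm.id D)) := by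
  calc Hm.pa f (Hm.id B) ⋙' (Hm.pa (Hm.id A') w ⋙' Hm.pal A' C₁ D)
      ≈' (Hm.pa f (Hm.id B) ⋙' Hm.pa (Hm.id A') w) ⋙' Hm.pal A' C₁ D := R.assoc' _ _ _
    _ ≈' (Hm.pa (Hm.id A) w ⋙' Hm.pa f (Hm.id (C₁.pa D))) ⋙' Hm.pal A' C₁ D :=
        R.compCongrL _ (R.paExch f w)
    _ ≈' Hm.pa (Hm.id A) w ⋙' (Hm.pa f (Hm.id (C₁.pa D)) ⋙' Hm.pal A' C₁ D) := R.assoc _ _ _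
    _ ≈' Hm.pa (Hm.id A) w ⋙' (Hm.pa f (Hm.pa (Hm.id C₁) (Hm.id D)) ⋙' Hm.pal A' C₁ D) :=
        R.compCongrR _ (R.compCongrL _ (R.paCongr (R.refl _) (R.symm (R.paId _ _))))
    _ ≈' Hm.pa (Hm.id A) w ⋙' (Hm.pal A C₁ D ⋙' Hm.pa (Hm.pa f (Hm.id C₁)) (Hm.id D)) :=
        R.compCongrR _ (R.natPal f (Hm.id C₁) (Hm.id D))
    _ ≈' (Hm.pa (Hm.id A) w ⋙' Hm.pal A C₁ D) ⋙' Hm.pa (Hm.pa f (Hm.id C₁)) (Hm.id D) :=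
        R.assoc' _ _ _

/-- natPal-right chain : `c = paR`, `D' = paR`, with sub-coherence -/
lemma chainPalR {w : Hm B (C₁.pa D)} {w' : Hm B' (C₂.pa C)} {s : Hm B B'}
    {k₁ : Hm C₁ C₂} {k₂ : Hm D C}
    (hsub : R (s ⋙' w') (w ⋙' Hm.pa k₁ k₂)) :
    R (Hm.pa (Hm.id A) s ⋙' (Hm.pa (Hm.id A) w' ⋙' Hm.pal A C₂ C))
      ((Hm.pa (Hm.id A) w ⋙' Hm.pal A C₁ D) ⋙' Hm.pa (Hm.pa (Hm.id A) k₁) k₂) := by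
  calc Hm.pa (Hm.id A) s ⋙' (Hm.pa (Hm.id A) w' ⋙' Hm.pal A C₂ C)
      ≈' (Hm.pa (Hm.id A) s ⋙' Hm.pa (Hm.id A) w') ⋙' Hm.pal A C₂ C := R.assoc' _ _ _
    _ ≈' Hm.pa (Hm.id A) (s ⋙' w') ⋙' Hm.pal A C₂ C := R.compCongrL _ (R.paMergeR _ _)
    _ ≈' Hm.pa (Hm.id A) (w ⋙' Hm.pa k₁ k₂) ⋙' Hm.pal A C₂ C :=
        R.compCongrL _ (R.paCongr (R.refl _) hsub)
    _ ≈' (Hm.pa (Hm.id A) w ⋙' Hm.pa (Hm.id A) (Hm.pa k₁ k₂)) ⋙' Hm.pal A C₂ C :=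
        R.compCongrL _ (R.symm (R.paMergeR _ _))
    _ ≈' Hm.pa (Hm.id A) w ⋙' (Hm.pa (Hm.id A) (Hm.pa k₁ k₂) ⋙' Hm.pal A C₂ C) := R.assoc _ _ _
    _ ≈' Hm.pa (Hm.id A) w ⋙' (Hm.pal A C₁ D ⋙' Hm.pa (Hm.pa (Hm.id A) k₁) k₂) :=
        R.compCongrR _ (R.natPal (Hm.id A) k₁ k₂)
    _ ≈' (Hm.pa (Hm.id A) w ⋙' Hm.pal A C₁ D) ⋙' Hm.pa (Hm.pa (Hm.id A) k₁) k₂ := R.assoc' _ _ _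

/-- natDr chain with sub-coherence : `c = otL`, `D' = otL` -/
lemma chainDrL {w : Hm A (C₁.pa D)} {w' : Hm A' (C₂.pa C)} {s : Hm A A'}
    {k₁ : Hm C₁ C₂} {k₂ : Hm D C}
    (hsub : R (s ⋙' w') (w ⋙' Hm.pa k₁ k₂)) :
    R (Hm.ot s (Hm.id B) ⋙' (Hm.ot w' (Hm.id B) ⋙' Hm.dr C₂ C B))
      ((Hm.ot w (Hm.id B) ⋙' Hm.dr C₁ D B) ⋙' Hm.pa k₁ (Hm.ot k₂ (Hm.id B))) := by
  calc Hm.ot s (Hm.id B) ⋙' (Hm.ot w' (Hm.id B) ⋙' Hm.dr C₂ C B)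
      ≈' (Hm.ot s (Hm.id B) ⋙' Hm.ot w' (Hm.id B)) ⋙' Hm.dr C₂ C B := R.assoc' _ _ _
    _ ≈' Hm.ot (s ⋙' w') (Hm.id B ⋙' Hm.id B) ⋙' Hm.dr C₂ C B :=
        R.compCongrL _ (R.symm (R.otComp _ _ _ _))
    _ ≈' Hm.ot (w ⋙' Hm.pa k₁ k₂) (Hm.id B ⋙' Hm.id B) ⋙' Hm.dr C₂ C B :=
        R.compCongrL _ (R.otCongr hsub (R.refl _))
    _ ≈' (Hm.ot w (Hm.id B) ⋙' Hm.ot (Hm.pa k₁ k₂) (Hm.id B)) ⋙' Hm.dr C₂ C B :=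
        R.compCongrL _ (R.otComp _ _ _ _)
    _ ≈' Hm.ot w (Hm.id B) ⋙' (Hm.ot (Hm.pa k₁ k₂) (Hm.id B) ⋙' Hm.dr C₂ C B) := R.assoc _ _ _
    _ ≈' Hm.ot w (Hm.id B) ⋙' (Hm.dr C₁ D B ⋙' Hm.pa k₁ (Hm.ot k₂ (Hm.id B))) :=
        R.compCongrR _ (R.natDr k₁ k₂ (Hm.id B))
    _ ≈' (Hm.ot w (Hm.id B) ⋙' Hm.dr C₁ D B) ⋙' Hm.pa k₁ (Hm.ot k₂ (Hm.id B)) := R.assoc' _ _ _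

/-- natDl chain : `c = otL`, `D' = otR` -/
lemma chainDlL (f : Hm A A') (w : Hm B (C₁.pa D)) :
    R (Hm.ot f (Hm.id B) ⋙' (Hm.ot (Hm.id A') w ⋙' Hm.dl A' C₁ D))
      ((Hm.ot (Hm.id A) w ⋙' Hm.dl A C₁ D) ⋙' Hm.pa (Hm.ot f (Hm.id C₁)) (Hm.id D)) := by
  calc Hm.ot f (Hm.id B) ⋙' (Hm.ot (Hm.id A') w ⋙' Hm.dl A' C₁ D)
      ≈' (Hm.ot f (Hm.id B) ⋙' Hm.ot (Hm.id A') w) ⋙' Hm.dl A' C₁ D := R.assoc' _ _ _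
    _ ≈' (Hm.ot (Hm.id A) w ⋙' Hm.ot f (Hm.id (C₁.pa D))) ⋙' Hm.dl A' C₁ D :=
        R.compCongrL _ (R.otExch f w)
    _ ≈' Hm.ot (Hm.id A) w ⋙' (Hm.ot f (Hm.id (C₁.pa D)) ⋙' Hm.dl A' C₁ D) := R.assoc _ _ _
    _ ≈' Hm.ot (Hm.id A) w ⋙' (Hm.ot f (Hm.pa (Hm.id C₁) (Hm.id D)) ⋙' Hm.dl A' C₁ D) :=
        R.compCongrR _ (R.compCongrL _ (R.otCongr (R.refl _) (R.symm (R.paId _ _))))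
    _ ≈' Hm.ot (Hm.id A) w ⋙' (Hm.dl A C₁ D ⋙' Hm.pa (Hm.ot f (Hm.id C₁)) (Hm.id D)) :=
        R.compCongrR _ (R.natDl f (Hm.id C₁) (Hm.id D))
    _ ≈' (Hm.ot (Hm.id A) w ⋙' Hm.dl A C₁ D) ⋙' Hm.pa (Hm.ot f (Hm.id C₁)) (Hm.id D) :=
        R.assoc' _ _ _

/-- natDr chain : `c = otR`, `D' = otL` -/
lemma chainDrR (w : Hm A (C₁.pa D)) (s : Hm B B') :
    R (Hm.ot (Hm.id A) s ⋙' (Hm.ot w (Hm.id B') ⋙' Hm.dr C₁ D B'))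
      ((Hm.ot w (Hm.id B) ⋙' Hm.dr C₁ D B) ⋙' Hm.pa (Hm.id C₁) (Hm.ot (Hm.id D) s)) := by
  calc Hm.ot (Hm.id A) s ⋙' (Hm.ot w (Hm.id B') ⋙' Hm.dr C₁ D B')
      ≈' (Hm.ot (Hm.id A) s ⋙' Hm.ot w (Hm.id B')) ⋙' Hm.dr C₁ D B' := R.assoc' _ _ _
    _ ≈' (Hm.ot w (Hm.id B) ⋙' Hm.ot (Hm.id (C₁.pa D)) s) ⋙' Hm.dr C₁ D B' :=
        R.compCongrL _ (R.otExch' w s)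
    _ ≈' Hm.ot w (Hm.id B) ⋙' (Hm.ot (Hm.id (C₁.pa D)) s ⋙' Hm.dr C₁ D B') := R.assoc _ _ _
    _ ≈' Hm.ot w (Hm.id B) ⋙' (Hm.ot (Hm.pa (Hm.id C₁) (Hm.id D)) s ⋙' Hm.dr C₁ D B') :=
        R.compCongrR _ (R.compCongrL _ (R.otCongr (R.symm (R.paId _ _)) (R.refl _)))
    _ ≈' Hm.ot w (Hm.id B) ⋙' (Hm.dr C₁ D B ⋙' Hm.pa (Hm.id C₁) (Hm.ot (Hm.id D) s)) :=
        R.compCongrR _ (R.natDr (Hm.id C₁) (Hm.id D) s)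
    _ ≈' (Hm.ot w (Hm.id B) ⋙' Hm.dr C₁ D B) ⋙' Hm.pa (Hm.id C₁) (Hm.ot (Hm.id D) s) :=
        R.assoc' _ _ _

/-- natDl chain with sub-coherence : `c = otR`, `D' = otR` -/
lemma chainDlR {w : Hm B (C₁.pa D)} {w' : Hm B' (C₂.pa C)} {s : Hm B B'}
    {k₁ : Hm C₁ C₂} {k₂ : Hm D C}
    (hsub : R (s ⋙' w') (w ⋙' Hm.pa k₁ k₂)) :
    R (Hm.ot (Hm.id A) s ⋙' (Hm.ot (Hm.id A) w' ⋙' Hm.dl A C₂ C))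
      ((Hm.ot (Hm.id A) w ⋙' Hm.dl A C₁ D) ⋙' Hm.pa (Hm.ot (Hm.id A) k₁) k₂) := by
  calc Hm.ot (Hm.id A) s ⋙' (Hm.ot (Hm.id A) w' ⋙' Hm.dl A C₂ C)
      ≈' (Hm.ot (Hm.id A) s ⋙' Hm.ot (Hm.id A) w') ⋙' Hm.dl A C₂ C := R.assoc' _ _ _
    _ ≈' Hm.ot (Hm.id A) (s ⋙' w') ⋙' Hm.dl A C₂ C := R.compCongrL _ (R.otMergeR _ _)
    _ ≈' Hm.ot (Hm.id A) (w ⋙' Hm.pa k₁ k₂) ⋙' Hm.dl A C₂ C :=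
        R.compCongrL _ (R.otCongr (R.refl _) hsub)
    _ ≈' (Hm.ot (Hm.id A) w ⋙' Hm.ot (Hm.id A) (Hm.pa k₁ k₂)) ⋙' Hm.dl A C₂ C :=
        R.compCongrL _ (R.symm (R.otMergeR _ _))
    _ ≈' Hm.ot (Hm.id A) w ⋙' (Hm.ot (Hm.id A) (Hm.pa k₁ k₂) ⋙' Hm.dl A C₂ C) := R.assoc _ _ _
    _ ≈' Hm.ot (Hm.id A) w ⋙' (Hm.dl A C₁ D ⋙' Hm.pa (Hm.ot (Hm.id A) k₁) k₂) :=
        R.compCongrR _ (R.natDl (Hm.id A) k₁ k₂)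
    _ ≈' (Hm.ot (Hm.id A) w ⋙' Hm.dl A C₁ D) ⋙' Hm.pa (Hm.ot (Hm.id A) k₁) k₂ := R.assoc' _ _ _

end ChainLemmas

end Hm.R

end Syn
end LaxLDCoherence

namespace LaxLDCoherence
namespace Syn

variable {S : Type}

open PT Hm

namespace Hm.R

section PentChains

variable {A B C D A₁ A₂ B₁ B₂ C₁ C₂ : PT S}

/-- P5 chain: `c = rAl`, inner split in A -/
lemma chainP5 (wA : Hm A (A₁.pa A₂)) (B C : PT S) :
    R (Hm.al A B C ⋙' (Hm.ot (Hm.ot wA (Hm.id B) ⋙' Hm.dr A₁ A₂ B) (Hm.id C) ⋙' Hm.dr A₁ (A₂.ot B) C))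
      ((Hm.ot wA (Hm.id (B.ot C)) ⋙' Hm.dr A₁ A₂ (B.ot C)) ⋙' Hm.pa (Hm.id A₁) (Hm.al A₂ B C)) := by
  calc Hm.al A B C ⋙' (Hm.ot (Hm.ot wA (Hm.id B) ⋙' Hm.dr A₁ A₂ B) (Hm.id C) ⋙' Hm.dr A₁ (A₂.ot B) C)
      ≈' Hm.al A B C ⋙' ((Hm.ot (Hm.ot wA (Hm.id B)) (Hm.id C) ⋙' Hm.ot (Hm.dr A₁ A₂ B) (Hm.id C)) ⋙' Hm.dr A₁ (A₂.ot B) C) :=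
        R.compCongrR _ (R.compCongrL _ (R.otSplitCompL _ _))
    _ ≈' (Hm.al A B C ⋙' Hm.ot (Hm.ot wA (Hm.id B)) (Hm.id C)) ⋙' (Hm.ot (Hm.dr A₁ A₂ B) (Hm.id C) ⋙' Hm.dr A₁ (A₂.ot B) C) := by
        refine R.trans (R.compCongrR _ (R.assoc _ _ _)) (R.assoc' _ _ _)
    _ ≈' (Hm.ot wA (Hm.ot (Hm.id B) (Hm.id C)) ⋙' Hm.al (A₁.pa A₂) B C) ⋙' (Hm.ot (Hm.dr A₁ A₂ B) (Hm.id C) ⋙' Hm.dr A₁ (A₂.ot B) C) :=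
        R.compCongrL _ (R.symm (R.natAl wA (Hm.id B) (Hm.id C)))
    _ ≈' Hm.ot wA (Hm.ot (Hm.id B) (Hm.id C)) ⋙' (Hm.al (A₁.pa A₂) B C ⋙' (Hm.ot (Hm.dr A₁ A₂ B) (Hm.id C) ⋙' Hm.dr A₁ (A₂.ot B) C)) :=
        R.assoc _ _ _
    _ ≈' Hm.ot wA (Hm.ot (Hm.id B) (Hm.id C)) ⋙' (Hm.dr A₁ A₂ (B.ot C) ⋙' Hm.pa (Hm.id A₁) (Hm.al A₂ B C)) :=
        R.compCongrR _ (R.symm (R.pent5 A₁ A₂ B C))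
    _ ≈' Hm.ot wA (Hm.id (B.ot C)) ⋙' (Hm.dr A₁ A₂ (B.ot C) ⋙' Hm.pa (Hm.id A₁) (Hm.al A₂ B C)) :=
        R.compCongrL _ (R.otCongr (R.refl _) (R.otId _ _))
    _ ≈' (Hm.ot wA (Hm.id (B.ot C)) ⋙' Hm.dr A₁ A₂ (B.ot C)) ⋙' Hm.pa (Hm.id A₁) (Hm.al A₂ B C) :=
        R.assoc' _ _ _

/-- P3 chain: `c = rAl`, inner split in B -/
lemma chainP3 (A : PT S) (wB : Hm B (B₁.pa B₂)) (C : PT S) :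
    R (Hm.al A B C ⋙' (Hm.ot (Hm.ot (Hm.id A) wB ⋙' Hm.dl A B₁ B₂) (Hm.id C) ⋙' Hm.dr (A.ot B₁) B₂ C))
      ((Hm.ot (Hm.id A) (Hm.ot wB (Hm.id C) ⋙' Hm.dr B₁ B₂ C) ⋙' Hm.dl A B₁ (B₂.ot C)) ⋙' Hm.pa (Hm.id (A.ot B₁)) (Hm.id (B₂.ot C))) := by
  refine R.trans ?_ (R.addPaId _)
  calc Hm.al A B C ⋙' (Hm.ot (Hm.ot (Hm.id A) wB ⋙' Hm.dl A B₁ B₂) (Hm.id C) ⋙' Hm.dr (A.ot B₁) B₂ C)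
      ≈' Hm.al A B C ⋙' ((Hm.ot (Hm.ot (Hm.id A) wB) (Hm.id C) ⋙' Hm.ot (Hm.dl A B₁ B₂) (Hm.id C)) ⋙' Hm.dr (A.ot B₁) B₂ C) :=
        R.compCongrR _ (R.compCongrL _ (R.otSplitCompL _ _))
    _ ≈' (Hm.al A B C ⋙' Hm.ot (Hm.ot (Hm.id A) wB) (Hm.id C)) ⋙' (Hm.ot (Hm.dl A B₁ B₂) (Hm.id C) ⋙' Hm.dr (A.ot B₁) B₂ C) := by
        refine R.trans (R.compCongrR _ (R.assoc _ _ _)) ?_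
        exact R.assoc' _ _ _
    _ ≈' (Hm.ot (Hm.id A) (Hm.ot wB (Hm.id C)) ⋙' Hm.al A (B₁.pa B₂) C) ⋙' (Hm.ot (Hm.dl A B₁ B₂) (Hm.id C) ⋙' Hm.dr (A.ot B₁) B₂ C) :=
        R.compCongrL _ (R.symm (R.natAl (Hm.id A) wB (Hm.id C)))
    _ ≈' Hm.ot (Hm.id A) (Hm.ot wB (Hm.id C)) ⋙' (Hm.al A (B₁.pa B₂) C ⋙' (Hm.ot (Hm.dl A B₁ B₂) (Hm.id C) ⋙' Hm.dr (A.ot B₁) B₂ C)) :=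
        R.assoc _ _ _
    _ ≈' Hm.ot (Hm.id A) (Hm.ot wB (Hm.id C)) ⋙' (Hm.ot (Hm.id A) (Hm.dr B₁ B₂ C) ⋙' Hm.dl A B₁ (B₂.ot C)) :=
        R.compCongrR _ (R.symm (R.pent3 A B₁ B₂ C))
    _ ≈' (Hm.ot (Hm.id A) (Hm.ot wB (Hm.id C)) ⋙' Hm.ot (Hm.id A) (Hm.dr B₁ B₂ C)) ⋙' Hm.dl A B₁ (B₂.ot C) :=
        R.assoc' _ _ _
    _ ≈' Hm.ot (Hm.id A) (Hm.ot wB (Hm.id C) ⋙' Hm.dr B₁ B₂ C) ⋙' Hm.dl A B₁ (B₂.ot C) :=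
        R.compCongrL _ (R.otMergeR _ _)

/-- P2 chain: `c = rAl`, inner split in C -/
lemma chainP2 (A B : PT S) (wC : Hm C (C₁.pa C₂)) :
    R (Hm.al A B C ⋙' (Hm.ot (Hm.id (A.ot B)) wC ⋙' Hm.dl (A.ot B) C₁ C₂))
      ((Hm.ot (Hm.id A) (Hm.ot (Hm.id B) wC ⋙' Hm.dl B C₁ C₂) ⋙' Hm.dl A (B.ot C₁) C₂) ⋙' Hm.pa (Hm.al A B C₁) (Hm.id C₂)) := by
  calc Hm.al A B C ⋙' (Hm.ot (Hm.id (A.ot B)) wC ⋙' Hm.dl (A.ot B) C₁ C₂)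
      ≈' (Hm.al A B C ⋙' Hm.ot (Hm.ot (Hm.id A) (Hm.id B)) wC) ⋙' Hm.dl (A.ot B) C₁ C₂ := by
        refine R.trans (R.compCongrR _ (R.compCongrL _ ?_)) (R.assoc' _ _ _)
        exact R.otCongr (R.symm (R.otId _ _)) (R.refl _)
    _ ≈' (Hm.ot (Hm.id A) (Hm.ot (Hm.id B) wC) ⋙' Hm.al A B (C₁.pa C₂)) ⋙' Hm.dl (A.ot B) C₁ C₂ :=
        R.compCongrL _ (R.symm (R.natAl (Hm.id A) (Hm.id B) wC))
    _ ≈' Hm.ot (Hm.id A) (Hm.ot (Hm.id B) wC) ⋙' (Hm.al A B (C₁.pa C₂) ⋙' Hm.dl (A.ot B) C₁ C₂) :=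
        R.assoc _ _ _
    _ ≈' Hm.ot (Hm.id A) (Hm.ot (Hm.id B) wC) ⋙' (Hm.ot (Hm.id A) (Hm.dl B C₁ C₂) ⋙' (Hm.dl A (B.ot C₁) C₂ ⋙' Hm.pa (Hm.al A B C₁) (Hm.id C₂))) :=
        R.compCongrR _ (R.pent2 A B C₁ C₂)
    _ ≈' (Hm.ot (Hm.id A) (Hm.ot (Hm.id B) wC) ⋙' Hm.ot (Hm.id A) (Hm.dl B C₁ C₂)) ⋙' (Hm.dl A (B.ot C₁) C₂ ⋙' Hm.pa (Hm.al A B C₁) (Hm.id C₂)) :=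
        R.assoc' _ _ _
    _ ≈' Hm.ot (Hm.id A) (Hm.ot (Hm.id B) wC ⋙' Hm.dl B C₁ C₂) ⋙' (Hm.dl A (B.ot C₁) C₂ ⋙' Hm.pa (Hm.al A B C₁) (Hm.id C₂)) :=
        R.compCongrL _ (R.otMergeR _ _)
    _ ≈' (Hm.ot (Hm.id A) (Hm.ot (Hm.id B) wC ⋙' Hm.dl B C₁ C₂) ⋙' Hm.dl A (B.ot C₁) C₂) ⋙' Hm.pa (Hm.al A B C₁) (Hm.id C₂) :=
        R.assoc' _ _ _

/-- P4 chain: `c = rDl`, inner split in C -/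
lemma chainP4 (A B : PT S) (wC : Hm C (C₁.pa C₂)) :
    R (Hm.dl A B C ⋙' (Hm.pa (Hm.id (A.ot B)) wC ⋙' Hm.pal (A.ot B) C₁ C₂))
      ((Hm.ot (Hm.id A) (Hm.pa (Hm.id B) wC ⋙' Hm.pal B C₁ C₂) ⋙' Hm.dl A (B.pa C₁) C₂) ⋙' Hm.pa (Hm.dl A B C₁) (Hm.id C₂)) := by
  calc Hm.dl A B C ⋙' (Hm.pa (Hm.id (A.ot B)) wC ⋙' Hm.pal (A.ot B) C₁ C₂)
      ≈' (Hm.dl A B C ⋙' Hm.pa (Hm.ot (Hm.id A) (Hm.id B)) wC) ⋙' Hm.pal (A.ot B) C₁ C₂ := by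
        refine R.trans (R.compCongrR _ (R.compCongrL _ ?_)) (R.assoc' _ _ _)
        exact R.paCongr (R.symm (R.otId _ _)) (R.refl _)
    _ ≈' (Hm.ot (Hm.id A) (Hm.pa (Hm.id B) wC) ⋙' Hm.dl A B (C₁.pa C₂)) ⋙' Hm.pal (A.ot B) C₁ C₂ :=
        R.compCongrL _ (R.symm (R.natDl (Hm.id A) (Hm.id B) wC))
    _ ≈' Hm.ot (Hm.id A) (Hm.pa (Hm.id B) wC) ⋙' (Hm.dl A B (C₁.pa C₂) ⋙' Hm.pal (A.ot B) C₁ C₂) :=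
        R.assoc _ _ _
    _ ≈' Hm.ot (Hm.id A) (Hm.pa (Hm.id B) wC) ⋙' (Hm.ot (Hm.id A) (Hm.pal B C₁ C₂) ⋙' (Hm.dl A (B.pa C₁) C₂ ⋙' Hm.pa (Hm.dl A B C₁) (Hm.id C₂))) :=
        R.compCongrR _ (R.pent4 A B C₁ C₂)
    _ ≈' (Hm.ot (Hm.id A) (Hm.pa (Hm.id B) wC) ⋙' Hm.ot (Hm.id A) (Hm.pal B C₁ C₂)) ⋙' (Hm.dl A (B.pa C₁) C₂ ⋙' Hm.pa (Hm.dl A B C₁) (Hm.id C₂)) :=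
        R.assoc' _ _ _
    _ ≈' Hm.ot (Hm.id A) (Hm.pa (Hm.id B) wC ⋙' Hm.pal B C₁ C₂) ⋙' (Hm.dl A (B.pa C₁) C₂ ⋙' Hm.pa (Hm.dl A B C₁) (Hm.id C₂)) :=
        R.compCongrL _ (R.otMergeR _ _)
    _ ≈' (Hm.ot (Hm.id A) (Hm.pa (Hm.id B) wC ⋙' Hm.pal B C₁ C₂) ⋙' Hm.dl A (B.pa C₁) C₂) ⋙' Hm.pa (Hm.dl A B C₁) (Hm.id C₂) :=
        R.assoc' _ _ _

/-- P8 chain: `c = rPal`, inner split in C -/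
lemma chainP8 (A B : PT S) (wC : Hm C (C₁.pa C₂)) :
    R (Hm.pal A B C ⋙' (Hm.pa (Hm.id (A.pa B)) wC ⋙' Hm.pal (A.pa B) C₁ C₂))
      ((Hm.pa (Hm.id A) (Hm.pa (Hm.id B) wC ⋙' Hm.pal B C₁ C₂) ⋙' Hm.pal A (B.pa C₁) C₂) ⋙' Hm.pa (Hm.pal A B C₁) (Hm.id C₂)) := by
  calc Hm.pal A B C ⋙' (Hm.pa (Hm.id (A.pa B)) wC ⋙' Hm.pal (A.pa B) C₁ C₂)
      ≈' (Hm.pal A B C ⋙' Hm.pa (Hm.pa (Hm.id A) (Hm.id B)) wC) ⋙' Hm.pal (A.pa B) C₁ C₂ := by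
        refine R.trans (R.compCongrR _ (R.compCongrL _ ?_)) (R.assoc' _ _ _)
        exact R.paCongr (R.symm (R.paId _ _)) (R.refl _)
    _ ≈' (Hm.pa (Hm.id A) (Hm.pa (Hm.id B) wC) ⋙' Hm.pal A B (C₁.pa C₂)) ⋙' Hm.pal (A.pa B) C₁ C₂ :=
        R.compCongrL _ (R.symm (R.natPal (Hm.id A) (Hm.id B) wC))
    _ ≈' Hm.pa (Hm.id A) (Hm.pa (Hm.id B) wC) ⋙' (Hm.pal A B (C₁.pa C₂) ⋙' Hm.pal (A.pa B) C₁ C₂) :=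
        R.assoc _ _ _
    _ ≈' Hm.pa (Hm.id A) (Hm.pa (Hm.id B) wC) ⋙' (Hm.pa (Hm.id A) (Hm.pal B C₁ C₂) ⋙' (Hm.pal A (B.pa C₁) C₂ ⋙' Hm.pa (Hm.pal A B C₁) (Hm.id C₂))) :=
        R.compCongrR _ (R.pent8 A B C₁ C₂)
    _ ≈' (Hm.pa (Hm.id A) (Hm.pa (Hm.id B) wC) ⋙' Hm.pa (Hm.id A) (Hm.pal B C₁ C₂)) ⋙' (Hm.pal A (B.pa C₁) C₂ ⋙' Hm.pa (Hm.pal A B C₁) (Hm.id C₂)) :=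
        R.assoc' _ _ _
    _ ≈' Hm.pa (Hm.id A) (Hm.pa (Hm.id B) wC ⋙' Hm.pal B C₁ C₂) ⋙' (Hm.pal A (B.pa C₁) C₂ ⋙' Hm.pa (Hm.pal A B C₁) (Hm.id C₂)) :=
        R.compCongrL _ (R.paMergeR _ _)
    _ ≈' (Hm.pa (Hm.id A) (Hm.pa (Hm.id B) wC ⋙' Hm.pal B C₁ C₂) ⋙' Hm.pal A (B.pa C₁) C₂) ⋙' Hm.pa (Hm.pal A B C₁) (Hm.id C₂) :=
        R.assoc' _ _ _

/-- P7 chain: `c = rDr`, inner split in B -/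
lemma chainP7 (A : PT S) (wB : Hm B (B₁.pa B₂)) (C : PT S) :
    R (Hm.dr A B C ⋙' (Hm.pa (Hm.id A) (Hm.ot wB (Hm.id C) ⋙' Hm.dr B₁ B₂ C) ⋙' Hm.pal A B₁ (B₂.ot C)))
      ((Hm.ot (Hm.pa (Hm.id A) wB ⋙' Hm.pal A B₁ B₂) (Hm.id C) ⋙' Hm.dr (A.pa B₁) B₂ C) ⋙' Hm.pa (Hm.id (A.pa B₁)) (Hm.id (B₂.ot C))) := by
  refine R.trans ?_ (R.addPaId _)
  calc Hm.dr A B C ⋙' (Hm.pa (Hm.id A) (Hm.ot wB (Hm.id C) ⋙' Hm.dr B₁ B₂ C) ⋙' Hm.pal A B₁ (B₂.ot C))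
      ≈' Hm.dr A B C ⋙' ((Hm.pa (Hm.id A) (Hm.ot wB (Hm.id C)) ⋙' Hm.pa (Hm.id A) (Hm.dr B₁ B₂ C)) ⋙' Hm.pal A B₁ (B₂.ot C)) :=
        R.compCongrR _ (R.compCongrL _ (R.symm (R.paMergeR _ _)))
    _ ≈' (Hm.dr A B C ⋙' Hm.pa (Hm.id A) (Hm.ot wB (Hm.id C))) ⋙' (Hm.pa (Hm.id A) (Hm.dr B₁ B₂ C) ⋙' Hm.pal A B₁ (B₂.ot C)) := by
        refine R.trans (R.compCongrR _ (R.assoc _ _ _)) (R.assoc' _ _ _)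
    _ ≈' (Hm.ot (Hm.pa (Hm.id A) wB) (Hm.id C) ⋙' Hm.dr A (B₁.pa B₂) C) ⋙' (Hm.pa (Hm.id A) (Hm.dr B₁ B₂ C) ⋙' Hm.pal A B₁ (B₂.ot C)) :=
        R.compCongrL _ (R.symm (R.natDr (Hm.id A) wB (Hm.id C)))
    _ ≈' Hm.ot (Hm.pa (Hm.id A) wB) (Hm.id C) ⋙' (Hm.dr A (B₁.pa B₂) C ⋙' (Hm.pa (Hm.id A) (Hm.dr B₁ B₂ C) ⋙' Hm.pal A B₁ (B₂.ot C))) :=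
        R.assoc _ _ _
    _ ≈' Hm.ot (Hm.pa (Hm.id A) wB) (Hm.id C) ⋙' (Hm.ot (Hm.pal A B₁ B₂) (Hm.id C) ⋙' Hm.dr (A.pa B₁) B₂ C) :=
        R.compCongrR _ (R.symm (R.pent7 A B₁ B₂ C))
    _ ≈' (Hm.ot (Hm.pa (Hm.id A) wB) (Hm.id C) ⋙' Hm.ot (Hm.pal A B₁ B₂) (Hm.id C)) ⋙' Hm.dr (A.pa B₁) B₂ C :=
        R.assoc' _ _ _
    _ ≈' Hm.ot (Hm.pa (Hm.id A) wB ⋙' Hm.pal A B₁ B₂) (Hm.id C ⋙' Hm.id C) ⋙' Hm.dr (A.pa B₁) B₂ C :=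
        R.compCongrL _ (R.symm (R.otComp _ _ _ _))
    _ ≈' Hm.ot (Hm.pa (Hm.id A) wB ⋙' Hm.pal A B₁ B₂) (Hm.id C) ⋙' Hm.dr (A.pa B₁) B₂ C :=
        R.compCongrL _ (R.otCongr (R.refl _) (R.idComp _))

/-- P6 chain: `c = rDr`, inner split in C -/
lemma chainP6 (A B : PT S) (wC : Hm C (C₁.pa C₂)) :
    R (Hm.dr A B C ⋙' (Hm.pa (Hm.id A) (Hm.ot (Hm.id B) wC ⋙' Hm.dl B C₁ C₂) ⋙' Hm.pal A (B.ot C₁) C₂))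
      ((Hm.ot (Hm.id (A.pa B)) wC ⋙' Hm.dl (A.pa B) C₁ C₂) ⋙' Hm.pa (Hm.dr A B C₁) (Hm.id C₂)) := by
  calc Hm.dr A B C ⋙' (Hm.pa (Hm.id A) (Hm.ot (Hm.id B) wC ⋙' Hm.dl B C₁ C₂) ⋙' Hm.pal A (B.ot C₁) C₂)
      ≈' Hm.dr A B C ⋙' ((Hm.pa (Hm.id A) (Hm.ot (Hm.id B) wC) ⋙' Hm.pa (Hm.id A) (Hm.dl B C₁ C₂)) ⋙' Hm.pal A (B.ot C₁) C₂) :=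
        R.compCongrR _ (R.compCongrL _ (R.symm (R.paMergeR _ _)))
    _ ≈' (Hm.dr A B C ⋙' Hm.pa (Hm.id A) (Hm.ot (Hm.id B) wC)) ⋙' (Hm.pa (Hm.id A) (Hm.dl B C₁ C₂) ⋙' Hm.pal A (B.ot C₁) C₂) := by
        refine R.trans (R.compCongrR _ (R.assoc _ _ _)) (R.assoc' _ _ _)
    _ ≈' (Hm.ot (Hm.pa (Hm.id A) (Hm.id B)) wC ⋙' Hm.dr A B (C₁.pa C₂)) ⋙' (Hm.pa (Hm.id A) (Hm.dl B C₁ C₂) ⋙' Hm.pal A (B.ot C₁) C₂) :=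
        R.compCongrL _ (R.symm (R.natDr (Hm.id A) (Hm.id B) wC))
    _ ≈' Hm.ot (Hm.pa (Hm.id A) (Hm.id B)) wC ⋙' (Hm.dr A B (C₁.pa C₂) ⋙' (Hm.pa (Hm.id A) (Hm.dl B C₁ C₂) ⋙' Hm.pal A (B.ot C₁) C₂)) :=
        R.assoc _ _ _
    _ ≈' Hm.ot (Hm.pa (Hm.id A) (Hm.id B)) wC ⋙' (Hm.dl (A.pa B) C₁ C₂ ⋙' Hm.pa (Hm.dr A B C₁) (Hm.id C₂)) :=
        R.compCongrR _ (R.symm (R.pent6 A B C₁ C₂))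
    _ ≈' Hm.ot (Hm.id (A.pa B)) wC ⋙' (Hm.dl (A.pa B) C₁ C₂ ⋙' Hm.pa (Hm.dr A B C₁) (Hm.id C₂)) :=
        R.compCongrL _ (R.otCongr (R.paId _ _) (R.refl _))
    _ ≈' (Hm.ot (Hm.id (A.pa B)) wC ⋙' Hm.dl (A.pa B) C₁ C₂) ⋙' Hm.pa (Hm.dr A B C₁) (Hm.id C₂) :=
        R.assoc' _ _ _

end PentChains

end Hm.R

end Syn
end LaxLDCoherence

namespace LaxLDCoherence
namespace Syn

variable {S : Type}

open PT Hm

/-- derivations of maximal reachable `pa`-splits at a given boundary -/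
inductive Phat : PT S → ℕ → PT S → PT S → Type where
  | paEq (A B : PT S) : Phat (A.pa B) A.size A B
  | paR {B : PT S} {t : ℕ} {C D : PT S} (A : PT S) :
      Phat B t C D → Phat (A.pa B) (A.size + t) (A.pa C) D
  | otL {A : PT S} {t : ℕ} {C D : PT S} (B : PT S) :
      Phat A t C D → Phat (A.ot B) t C (D.ot B)
  | otR {B : PT S} {t : ℕ} {C D : PT S} (A : PT S) :
      Phat B t C D → Phat (A.ot B) (A.size + t) (A.ot C) D

namespace Phat

def tm : ∀ {Z : PT S} {t : ℕ} {U V : PT S}, Phat Z t U V → Hm Z (U.pa V)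
  | _, _, _, _, paEq A B => Hm.id (A.pa B)
  | _, _, _, _, @paR _ B _ C D A P => Hm.pa (Hm.id A) P.tm ⋙' Hm.pal A C D
  | _, _, _, _, @otL _ A _ C D B P => Hm.ot P.tm (Hm.id B) ⋙' Hm.dr C D B
  | _, _, _, _, @otR _ B _ C D A P => Hm.ot (Hm.id A) P.tm ⋙' Hm.dl A C D

def castT {Z : PT S} {t t' : ℕ} {U V : PT S} (h : t = t') (D : Phat Z t U V) :
    Phat Z t' U V := h ▸ D

lemma castT_tm {Z : PT S} {t t' : ℕ} {U V : PT S} (h : t = t') (D : Phat Z t U V) :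
    (castT h D).tm = D.tm := by subst h; rfl

lemma bounds : ∀ {Z : PT S} {t : ℕ} {U V : PT S}, Phat Z t U V →
    U.size = t ∧ U.size + V.size = Z.size := by
  intro Z t U V P
  induction P with
  | paEq A B => exact ⟨rfl, rfl⟩
  | paR A P ih => simp only [PT.size]; omega
  | otL B P ih => simp only [PT.size]; omega
  | otR A P ih => simp only [PT.size]; omega

end Phat

namespace Hm.R

lemma unitCoh {X Y₁ Y₂ : PT S} (e : Hm X (Y₁.pa Y₂)) {p : Hm X X} (hp : R p (Hm.id X)) :
    R (e ⋙' Hm.id (Y₁.pa Y₂)) ((p ⋙' e) ⋙' Hm.pa (Hm.id Y₁) (Hm.id Y₂)) := by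
  refine R.trans (R.compId _) (R.symm ?_)
  calc (p ⋙' e) ⋙' Hm.pa (Hm.id Y₁) (Hm.id Y₂)
      ≈' (Hm.id X ⋙' e) ⋙' Hm.id (Y₁.pa Y₂) := R.compCongr (R.compCongrL _ hp) (R.paId _ _)
    _ ≈' Hm.id X ⋙' e := R.compId _
    _ ≈' e := R.idComp _

end Hm.R

theorem phat_coh : ∀ {Z Z' : PT S} (c : Step Z Z') {t : ℕ} {U' V' : PT S} (D' : Phat Z' t U' V'),
    ∃ (U V : PT S) (D : Phat Z t U V) (k₁ : Hm U U') (k₂ : Hm V V'),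
      R (c.tm ⋙' D'.tm) (D.tm ⋙' Hm.pa k₁ k₂) := by
  intro Z Z' c
  induction c with
  | @otL A A' B s ih =>
      intro t U' V' D'
      cases D' with
      | otL B D₀ =>
          obtain ⟨C₀, D₀', Ds, k₁, k₂, hc⟩ := ih D₀
          exact ⟨C₀, D₀'.ot B, Phat.otL B Ds, k₁, Hm.ot k₂ (Hm.id B), R.chainDrL hc⟩
      | @otR _ t₀ C₀ D₀v A' D₀ =>
          refine ⟨_, _, Phat.castT (by rw [s.size_eq]) (Phat.otR A D₀),
            Hm.ot s.tm (Hm.id _), Hm.id _, ?_⟩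
          rw [Phat.castT_tm]
          exact R.chainDlL s.tm D₀.tm
  | @otR A B B' s ih =>
      intro t U' V' D'
      cases D' with
      | otL B' D₀ =>
          exact ⟨_, _, Phat.otL B D₀, Hm.id _, Hm.ot (Hm.id _) s.tm, R.chainDrR D₀.tm s.tm⟩
      | otR A D₀ =>
          obtain ⟨C₀, D₀', Ds, k₁, k₂, hc⟩ := ih D₀
          exact ⟨_, _, Phat.otR A Ds, Hm.ot (Hm.id A) k₁, k₂, R.chainDlR hc⟩
  | @paL A A' B s ih =>
      intro t U' V' D'
      cases D' with
      | paEq =>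
          refine ⟨_, _, Phat.castT (by rw [s.size_eq]) (Phat.paEq A B), s.tm, Hm.id B, ?_⟩
          rw [Phat.castT_tm]
          exact R.trans (R.compId _) (R.symm (R.idComp _))
      | @paR _ t₀ C₀ D₀v A' D₀ =>
          refine ⟨_, _, Phat.castT (by rw [s.size_eq]) (Phat.paR A D₀),
            Hm.pa s.tm (Hm.id _), Hm.id _, ?_⟩
          rw [Phat.castT_tm]
          exact R.chainPalL s.tm D₀.tm
  | @paR A B B' s ih =>
      intro t U' V' D'
      cases D' with
      | paEq =>
          exact ⟨_, _, Phat.paEq A B, Hm.id A, s.tm,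
            R.trans (R.compId _) (R.symm (R.idComp _))⟩
      | paR A D₀ =>
          obtain ⟨C₀, D₀', Ds, k₁, k₂, hc⟩ := ih D₀
          exact ⟨_, _, Phat.paR A Ds, Hm.pa (Hm.id A) k₁, k₂, R.chainPalR hc⟩
  | rAl A B C =>
      intro t U' V' D'
      cases D' with
      | otL C D₁ =>
          cases D₁ with
          | otL B D₂ =>
              exact ⟨_, _, Phat.otL (B.ot C) D₂, Hm.id _, Hm.al _ B C, R.chainP5 D₂.tm B C⟩
          | otR A D₂ =>
              exact ⟨_, _, Phat.otR A (Phat.otL C D₂), Hm.id _, Hm.id _, R.chainP3 A D₂.tm C⟩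
      | @otR _ t₀ C₁ C₂ _ D₁ =>
          have harith : A.size + (B.size + t₀) = (A.ot B).size + t₀ := by
            simp [PT.size]; omega
          refine ⟨_, _, Phat.castT harith (Phat.otR A (Phat.otR B D₁)),
            Hm.al A B C₁, Hm.id _, ?_⟩
          rw [Phat.castT_tm]
          exact R.chainP2 A B D₁.tm
  | rDl A B C =>
      intro t U' V' D'
      cases D' with
      | paEq =>
          have harith : A.size + B.size = (A.ot B).size := by simp [PT.size]
          refine ⟨_, _, Phat.castT harith (Phat.otR A (Phat.paEq B C)), Hm.id _, Hm.id _, ?_⟩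
          rw [Phat.castT_tm]
          exact R.unitCoh _ (R.otId _ _)
      | @paR _ t₀ C₁ C₂ _ D₁ =>
          have harith : A.size + (B.size + t₀) = (A.ot B).size + t₀ := by
            simp [PT.size]; omega
          refine ⟨_, _, Phat.castT harith (Phat.otR A (Phat.paR B D₁)),
            Hm.dl A B C₁, Hm.id _, ?_⟩
          rw [Phat.castT_tm]
          exact R.chainP4 A B D₁.tm
  | rDr A B C =>
      intro t U' V' D'
      cases D' with
      | paEq =>
          exact ⟨_, _, Phat.otL C (Phat.paEq A B), Hm.id _, Hm.id _,
            R.unitCoh _ (R.otId _ _)⟩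
      | paR A D₁ =>
          cases D₁ with
          | otL C D₂ =>
              exact ⟨_, _, Phat.otL C (Phat.paR A D₂), Hm.id _, Hm.id _, R.chainP7 A D₂.tm C⟩
          | @otR _ t₁ C₁ C₂ _ D₂ =>
              have harith : (A.pa B).size + t₁ = A.size + (B.size + t₁) := by
                simp [PT.size]; omega
              refine ⟨_, _, Phat.castT harith (Phat.otR (A.pa B) D₂),
                Hm.dr A B C₁, Hm.id _, ?_⟩
              rw [Phat.castT_tm]
              exact R.chainP6 A B D₂.tm
  | rPal A B C =>
      intro t U' V' D'
      cases D' with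
      | paEq =>
          have harith : A.size + B.size = (A.pa B).size := by simp [PT.size]
          refine ⟨_, _, Phat.castT harith (Phat.paR A (Phat.paEq B C)), Hm.id _, Hm.id _, ?_⟩
          rw [Phat.castT_tm]
          exact R.unitCoh _ (R.paId _ _)
      | @paR _ t₀ C₁ C₂ _ D₁ =>
          have harith : A.size + (B.size + t₀) = (A.pa B).size + t₀ := by
            simp [PT.size]; omega
          refine ⟨_, _, Phat.castT harith (Phat.paR A (Phat.paR B D₁)),
            Hm.pal A B C₁, Hm.id _, ?_⟩
          rw [Phat.castT_tm]
          exact R.chainP8 A B D₁.tm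

end Syn
end LaxLDCoherence

namespace LaxLDCoherence
namespace Syn

variable {S : Type}

open PT Hm

/-- derivations of maximal reachable `ot`-splits at a given boundary -/
inductive Ohat : PT S → ℕ → PT S → PT S → Type where
  | otEq (A B : PT S) : Ohat (A.ot B) A.size A B
  | otR {B : PT S} {t : ℕ} {C D : PT S} (A : PT S) :
      Ohat B t C D → Ohat (A.ot B) (A.size + t) (A.ot C) D

namespace Ohat

def tm : ∀ {Z : PT S} {t : ℕ} {U V : PT S}, Ohat Z t U V → Hm Z (U.ot V)
  | _, _, _, _, otEq A B => Hm.id (A.ot B)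
  | _, _, _, _, @otR _ B _ C D A P => Hm.ot (Hm.id A) P.tm ⋙' Hm.al A C D

lemma bounds : ∀ {Z : PT S} {t : ℕ} {U V : PT S}, Ohat Z t U V →
    U.size = t ∧ U.size + V.size = Z.size := by
  intro Z t U V P
  induction P with
  | otEq A B => exact ⟨rfl, rfl⟩
  | otR A P ih => simp only [PT.size]; omega

def castT {Z : PT S} {t t' : ℕ} {U V : PT S} (h : t = t') (D : Ohat Z t U V) :
    Ohat Z t' U V := h ▸ D

lemma castT_tm {Z : PT S} {t t' : ℕ} {U V : PT S} (h : t = t') (D : Ohat Z t U V) :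
    (castT h D).tm = D.tm := by subst h; rfl

end Ohat

/-- step-monotonicity of Ohat (existence only) -/
theorem ohat_step : ∀ {Z Z' : PT S} (c : Step Z Z') {t : ℕ} {U' V' : PT S} (D' : Ohat Z' t U' V'),
    ∃ (U V : PT S) (D : Ohat Z t U V), Nonempty (Hm U U') ∧ Nonempty (Hm V V') := by
  intro Z Z' c
  induction c with
  | @otL A A' B s ih =>
      intro t U' V' D'
      cases D' with
      | otEq =>
          exact ⟨_, _, Ohat.castT (by rw [s.size_eq]) (Ohat.otEq A B), ⟨s.tm⟩, ⟨Hm.id _⟩⟩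
      | otR A' D₀ =>
          exact ⟨_, _, Ohat.castT (by rw [s.size_eq]) (Ohat.otR A D₀),
            ⟨Hm.ot s.tm (Hm.id _)⟩, ⟨Hm.id _⟩⟩
  | @otR A B B' s ih =>
      intro t U' V' D'
      cases D' with
      | otEq =>
          exact ⟨_, _, Ohat.otEq A B, ⟨Hm.id _⟩, ⟨s.tm⟩⟩
      | otR A D₀ =>
          obtain ⟨C₀, D₀', Ds, ⟨k₁⟩, ⟨k₂⟩⟩ := ih D₀
          exact ⟨_, _, Ohat.otR A Ds, ⟨Hm.ot (Hm.id A) k₁⟩, ⟨k₂⟩⟩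
  | @paL A A' B s ih => intro t U' V' D'; cases D'
  | @paR A B B' s ih => intro t U' V' D'; cases D'
  | rAl A B C =>
      intro t U' V' D'
      cases D' with
      | otEq =>
          have h : A.size + B.size = (A.ot B).size := by simp [PT.size]
          exact ⟨_, _, Ohat.castT h (Ohat.otR A (Ohat.otEq B C)), ⟨Hm.id _⟩, ⟨Hm.id _⟩⟩
      | @otR _ t₀ C₁ C₂ _ D₁ =>
          have h : A.size + (B.size + t₀) = (A.ot B).size + t₀ := by simp [PT.size]; omega
          exact ⟨_, _, Ohat.castT h (Ohat.otR A (Ohat.otR B D₁)),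
            ⟨Hm.al A B C₁⟩, ⟨Hm.id _⟩⟩
  | rPal A B C => intro t U' V' D'; cases D'
  | rDl A B C => intro t U' V' D'; cases D'
  | rDr A B C => intro t U' V' D'; cases D'

/-- maximality of Ohat: every reachable split factors through it (existence only) -/
theorem ohat_max : ∀ (k : ℕ) {Z W₁ W₂ : PT S} (g : Hm Z (W₁.ot W₂)), Z.nu ≤ k →
    ∃ (U V : PT S) (D : Ohat Z W₁.size U V), Nonempty (Hm U W₁) ∧ Nonempty (Hm V W₂) := by
  intro k
  induction k with
  | zero =>
      intro Z W₁ W₂ g hk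
      exact absurd hk (by have := PT.nu_ge_two Z; omega)
  | succ k ih =>
      intro Z W₁ W₂ g hk
      rcases g.decomp with ⟨h, -⟩ | ⟨Z', c, g', -⟩
      · subst h
        exact ⟨W₁, W₂, Ohat.otEq W₁ W₂, ⟨Hm.id _⟩, ⟨Hm.id _⟩⟩
      · have hnu := c.nu_lt
        obtain ⟨U', V', D', ⟨k₁⟩, ⟨k₂⟩⟩ := ih g' (by omega)
        obtain ⟨U, V, D, ⟨j₁⟩, ⟨j₂⟩⟩ := ohat_step c D'
        exact ⟨U, V, D, ⟨j₁ ⋙' k₁⟩, ⟨j₂ ⋙' k₂⟩⟩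

/-- maximality of Phat -/
theorem phat_max : ∀ (k : ℕ) {Z W₁ W₂ : PT S} (g : Hm Z (W₁.pa W₂)), Z.nu ≤ k →
    ∃ (U V : PT S) (D : Phat Z W₁.size U V), Nonempty (Hm U W₁) ∧ Nonempty (Hm V W₂) := by
  intro k
  induction k with
  | zero =>
      intro Z W₁ W₂ g hk
      exact absurd hk (by have := PT.nu_ge_two Z; omega)
  | succ k ih =>
      intro Z W₁ W₂ g hk
      rcases g.decomp with ⟨h, -⟩ | ⟨Z', c, g', -⟩
      · subst h
        exact ⟨W₁, W₂, Phat.paEq W₁ W₂, ⟨Hm.id _⟩, ⟨Hm.id _⟩⟩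
      · have hnu := c.nu_lt
        obtain ⟨U', V', D', ⟨k₁⟩, ⟨k₂⟩⟩ := ih g' (by omega)
        obtain ⟨U, V, D, j₁, j₂, -⟩ := phat_coh c D'
        exact ⟨U, V, D, ⟨j₁ ⋙' k₁⟩, ⟨j₂ ⋙' k₂⟩⟩

end Syn
end LaxLDCoherence

namespace LaxLDCoherence
namespace Syn

variable {S : Type}

open PT Hm

namespace Phat

lemma det : ∀ {Z : PT S} {t : ℕ} {U V : PT S} (_ : Phat Z t U V)
    {t' : ℕ} {U' V' : PT S} (_ : Phat Z t' U' V'), t = t' → U = U' ∧ V = V' := by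
  intro Z t U V D
  induction D with
  | paEq A B =>
      intro t' U' V' D' h
      cases D' with
      | paEq => exact ⟨rfl, rfl⟩
      | @paR _ t₀ C Dv _ D₀ =>
          obtain ⟨hb1, hb2⟩ := D₀.bounds
          have hc := PT.size_pos C
          exact absurd h (by omega)
  | @paR B t₀ C Dv A D₀ ih =>
      intro t' U' V' D' h
      cases D' with
      | paEq =>
          obtain ⟨hb1, hb2⟩ := D₀.bounds
          have hc := PT.size_pos C
          exact absurd h (by omega)
      | @paR _ t₁ C' Dv' _ D₀' =>
          obtain ⟨h1, h2⟩ := ih D₀' (Nat.add_left_cancel h)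
          exact ⟨by rw [h1], h2⟩
  | @otL A t₀ C Dv B D₀ ih =>
      intro t' U' V' D' h
      cases D' with
      | otL B D₀' =>
          obtain ⟨h1, h2⟩ := ih D₀' h
          exact ⟨h1, by rw [h2]⟩
      | @otR _ t₁ C' Dv' _ D₀' =>
          obtain ⟨hb1, hb2⟩ := D₀.bounds
          obtain ⟨hb1', hb2'⟩ := D₀'.bounds
          have := PT.size_pos Dv
          have := PT.size_pos C'
          exact absurd h (by omega)
  | @otR B t₀ C Dv A D₀ ih =>
      intro t' U' V' D' h
      cases D' with
      | @otL _ t₁ C' Dv' _ D₀' =>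
          obtain ⟨hb1, hb2⟩ := D₀.bounds
          obtain ⟨hb1', hb2'⟩ := D₀'.bounds
          have := PT.size_pos Dv'
          have := PT.size_pos C
          exact absurd h (by omega)
      | otR A D₀' =>
          obtain ⟨h1, h2⟩ := ih D₀' (Nat.add_left_cancel h)
          exact ⟨by rw [h1], h2⟩

lemma det_tm : ∀ {Z : PT S} {t : ℕ} {U V : PT S} (D : Phat Z t U V)
    {t' : ℕ} (D' : Phat Z t' U V), R D.tm D'.tm := by
  intro Z t U V D
  induction D with
  | paEq A B =>
      intro t' D'
      cases D' with
      | paEq => exact R.refl _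
  | @paR B t₀ C Dv A D₀ ih =>
      intro t' D'
      cases D' with
      | paR A D₀' => exact R.compCongrL _ (R.paCongr (R.refl _) (ih D₀'))
  | @otL A t₀ C Dv B D₀ ih =>
      intro t' D'
      cases D' with
      | otL B D₀' => exact R.compCongrL _ (R.otCongr (ih D₀') (R.refl _))
      | @otR _ t₁ C' Dv' _ D₀' =>
          obtain ⟨hb1, hb2⟩ := D₀.bounds
          obtain ⟨hb1', hb2'⟩ := D₀'.bounds
          have := PT.size_pos Dv
          have := PT.size_pos C'
          simp only [PT.size] at hb1 hb2 hb1' hb2'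
          exact absurd hb2 (by omega)
  | @otR B t₀ C Dv A D₀ ih =>
      intro t' D'
      cases D' with
      | @otL _ t₁ C' Dv' _ D₀' =>
          obtain ⟨hb1, hb2⟩ := D₀.bounds
          obtain ⟨hb1', hb2'⟩ := D₀'.bounds
          have := PT.size_pos Dv'
          have := PT.size_pos C
          simp only [PT.size] at hb1 hb2 hb1' hb2'
          exact absurd hb2 (by omega)
      | otR A D₀' => exact R.compCongrL _ (R.otCongr (R.refl _) (ih D₀'))

end Phat

namespace Ohat

lemma det : ∀ {Z : PT S} {t : ℕ} {U V : PT S} (_ : Ohat Z t U V)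
    {t' : ℕ} {U' V' : PT S} (_ : Ohat Z t' U' V'), t = t' → U = U' ∧ V = V' := by
  intro Z t U V D
  induction D with
  | otEq A B =>
      intro t' U' V' D' h
      cases D' with
      | otEq => exact ⟨rfl, rfl⟩
      | @otR _ t₀ C Dv _ D₀ =>
          obtain ⟨hb1, hb2⟩ := D₀.bounds
          have hc := PT.size_pos C
          exact absurd h (by omega)
  | @otR B t₀ C Dv A D₀ ih =>
      intro t' U' V' D' h
      cases D' with
      | otEq =>
          obtain ⟨hb1, hb2⟩ := D₀.bounds
          have hc := PT.size_pos C
          exact absurd h (by omega)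
      | @otR _ t₁ C' Dv' _ D₀' =>
          obtain ⟨h1, h2⟩ := ih D₀' (Nat.add_left_cancel h)
          exact ⟨by rw [h1], h2⟩

lemma det_tm : ∀ {Z : PT S} {t : ℕ} {U V : PT S} (D : Ohat Z t U V)
    {t' : ℕ} (D' : Ohat Z t' U V), R D.tm D'.tm := by
  intro Z t U V D
  induction D with
  | otEq A B =>
      intro t' D'
      cases D' with
      | otEq => exact R.refl _
  | @otR B t₀ C Dv A D₀ ih =>
      intro t' D'
      cases D' with
      | otR A D₀' => exact R.compCongrL _ (R.otCongr (R.refl _) (ih D₀'))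

end Ohat

end Syn
end LaxLDCoherence

namespace LaxLDCoherence
namespace Syn

variable {S : Type}

open PT Hm

namespace Hm.R

lemma chainAssembleOt {X₁ X₂ U V A₀ B₀ Y₁ Y₂ : PT S} (wd : Hm X₂ (A₀.ot B₀))
    (k₁ : Hm A₀ U) (k₂ : Hm B₀ V) (v : Hm (X₁.ot U) Y₁) (v' : Hm V Y₂) :
    R (Hm.ot (Hm.id X₁) (wd ⋙' Hm.ot k₁ k₂) ⋙' (Hm.al X₁ U V ⋙' Hm.ot v v'))
      (Hm.ot (Hm.id X₁) wd ⋙' (Hm.al X₁ A₀ B₀ ⋙' Hm.ot (Hm.ot (Hm.id X₁) k₁ ⋙' v) (k₂ ⋙' v'))) := by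
  calc Hm.ot (Hm.id X₁) (wd ⋙' Hm.ot k₁ k₂) ⋙' (Hm.al X₁ U V ⋙' Hm.ot v v')
      ≈' (Hm.ot (Hm.id X₁) wd ⋙' Hm.ot (Hm.id X₁) (Hm.ot k₁ k₂)) ⋙' (Hm.al X₁ U V ⋙' Hm.ot v v') :=
        R.compCongrL _ (R.symm (R.otMergeR _ _))
    _ ≈' Hm.ot (Hm.id X₁) wd ⋙' (Hm.ot (Hm.id X₁) (Hm.ot k₁ k₂) ⋙' (Hm.al X₁ U V ⋙' Hm.ot v v')) :=
        R.assoc _ _ _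
    _ ≈' Hm.ot (Hm.id X₁) wd ⋙' ((Hm.ot (Hm.id X₁) (Hm.ot k₁ k₂) ⋙' Hm.al X₁ U V) ⋙' Hm.ot v v') :=
        R.compCongrR _ (R.assoc' _ _ _)
    _ ≈' Hm.ot (Hm.id X₁) wd ⋙' ((Hm.al X₁ A₀ B₀ ⋙' Hm.ot (Hm.ot (Hm.id X₁) k₁) k₂) ⋙' Hm.ot v v') :=
        R.compCongrR _ (R.compCongrL _ (R.natAl (Hm.id X₁) k₁ k₂))
    _ ≈' Hm.ot (Hm.id X₁) wd ⋙' (Hm.al X₁ A₀ B₀ ⋙' (Hm.ot (Hm.ot (Hm.id X₁) k₁) k₂ ⋙' Hm.ot v v')) :=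
        R.compCongrR _ (R.assoc _ _ _)
    _ ≈' Hm.ot (Hm.id X₁) wd ⋙' (Hm.al X₁ A₀ B₀ ⋙' Hm.ot (Hm.ot (Hm.id X₁) k₁ ⋙' v) (k₂ ⋙' v')) :=
        R.compCongrR _ (R.compCongrR _ (R.symm (R.otComp _ _ _ _)))

lemma chainAssemblePa {X₁ X₂ U V A₀ B₀ Y₁ Y₂ : PT S} (wd : Hm X₂ (A₀.pa B₀))
    (k₁ : Hm A₀ U) (k₂ : Hm B₀ V) (v : Hm (X₁.pa U) Y₁) (v' : Hm V Y₂) :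
    R (Hm.pa (Hm.id X₁) (wd ⋙' Hm.pa k₁ k₂) ⋙' (Hm.pal X₁ U V ⋙' Hm.pa v v'))
      (Hm.pa (Hm.id X₁) wd ⋙' (Hm.pal X₁ A₀ B₀ ⋙' Hm.pa (Hm.pa (Hm.id X₁) k₁ ⋙' v) (k₂ ⋙' v'))) := by
  calc Hm.pa (Hm.id X₁) (wd ⋙' Hm.pa k₁ k₂) ⋙' (Hm.pal X₁ U V ⋙' Hm.pa v v')
      ≈' (Hm.pa (Hm.id X₁) wd ⋙' Hm.pa (Hm.id X₁) (Hm.pa k₁ k₂)) ⋙' (Hm.pal X₁ U V ⋙' Hm.pa v v') :=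
        R.compCongrL _ (R.symm (R.paMergeR _ _))
    _ ≈' Hm.pa (Hm.id X₁) wd ⋙' (Hm.pa (Hm.id X₁) (Hm.pa k₁ k₂) ⋙' (Hm.pal X₁ U V ⋙' Hm.pa v v')) :=
        R.assoc _ _ _
    _ ≈' Hm.pa (Hm.id X₁) wd ⋙' ((Hm.pa (Hm.id X₁) (Hm.pa k₁ k₂) ⋙' Hm.pal X₁ U V) ⋙' Hm.pa v v') :=
        R.compCongrR _ (R.assoc' _ _ _)
    _ ≈' Hm.pa (Hm.id X₁) wd ⋙' ((Hm.pal X₁ A₀ B₀ ⋙' Hm.pa (Hm.pa (Hm.id X₁) k₁) k₂) ⋙' Hm.pa v v') :=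
        R.compCongrR _ (R.compCongrL _ (R.natPal (Hm.id X₁) k₁ k₂))
    _ ≈' Hm.pa (Hm.id X₁) wd ⋙' (Hm.pal X₁ A₀ B₀ ⋙' (Hm.pa (Hm.pa (Hm.id X₁) k₁) k₂ ⋙' Hm.pa v v')) :=
        R.compCongrR _ (R.assoc _ _ _)
    _ ≈' Hm.pa (Hm.id X₁) wd ⋙' (Hm.pal X₁ A₀ B₀ ⋙' Hm.pa (Hm.pa (Hm.id X₁) k₁ ⋙' v) (k₂ ⋙' v')) :=
        R.compCongrR _ (R.compCongrR _ (R.symm (R.paComp _ _ _ _)))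

end Hm.R

/-- standardization for `ot`-rooted sources with `pa`-rooted targets -/
theorem std3 (N : ℕ)
    (hpa : ∀ {P₁ P₂ Q : PT S} (u u' : Hm (P₁.pa P₂) Q), (P₁.pa P₂).size ≤ N → R u u') :
    ∀ (k : ℕ) {X₁ X₂ Y₁ Y₂ : PT S} (f : Hm (X₁.ot X₂) (Y₁.pa Y₂))
      {C₁ C₂ : PT S} (D : Phat (X₁.ot X₂) Y₁.size C₁ C₂),
      (X₁.ot X₂).nu ≤ k → (X₁.ot X₂).size ≤ N →
      ∃ r : Hm (C₁.pa C₂) (Y₁.pa Y₂), R f (D.tm ⋙' r) := by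
  intro k
  induction k with
  | zero =>
      intro X₁ X₂ Y₁ Y₂ f C₁ C₂ D hk hN
      exact absurd hk (by have := PT.nu_ge_two (X₁.ot X₂); omega)
  | succ k ih =>
      intro X₁ X₂ Y₁ Y₂ f C₁ C₂ D hk hN
      rcases f.decomp with ⟨h, -⟩ | ⟨X', c, f', hf⟩
      · exact nomatch h
      · have hnu := c.nu_lt
        have hsz := c.size_eq
        match X', c, f', hf with
        | PT.leaf s0, c, f', hf =>
            have h1 := f'.size_eq
            have h2 := PT.size_pos Y₁
            have h3 := PT.size_pos Y₂
            simp [PT.size] at h1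
            omega
        | PT.ot P₁ P₂, c, f', hf =>
            obtain ⟨W₁, W₂, D'', ⟨m₁⟩, ⟨m₂⟩⟩ := phat_max _ f' (le_refl _)
            obtain ⟨r', hr'⟩ := ih f' D'' (by omega) (by omega)
            obtain ⟨U₀, V₀, D₀, j₁, j₂, hcoh⟩ := phat_coh c D''
            obtain ⟨hU, hV⟩ := D₀.det D rfl
            subst hU; subst hV
            have htm : R D₀.tm D.tm := D₀.det_tm D
            refine ⟨Hm.pa j₁ j₂ ⋙' r', ?_⟩
            calc f ≈' c.tm ⋙' f' := hf
              _ ≈' c.tm ⋙' (D''.tm ⋙' r') := R.compCongrR _ hr'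
              _ ≈' (c.tm ⋙' D''.tm) ⋙' r' := R.assoc' _ _ _
              _ ≈' (D₀.tm ⋙' Hm.pa j₁ j₂) ⋙' r' := R.compCongrL _ hcoh
              _ ≈' D₀.tm ⋙' (Hm.pa j₁ j₂ ⋙' r') := R.assoc _ _ _
              _ ≈' D.tm ⋙' (Hm.pa j₁ j₂ ⋙' r') := R.compCongrL _ htm
        | PT.pa P₁ P₂, c, f', hf =>
            obtain ⟨W₁, W₂, D'', ⟨m₁⟩, ⟨m₂⟩⟩ := phat_max _ f' (le_refl _)
            have hthin : R f' (D''.tm ⋙' Hm.pa m₁ m₂) := hpa _ _ (by omega)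
            obtain ⟨U₀, V₀, D₀, j₁, j₂, hcoh⟩ := phat_coh c D''
            obtain ⟨hU, hV⟩ := D₀.det D rfl
            subst hU; subst hV
            have htm : R D₀.tm D.tm := D₀.det_tm D
            refine ⟨Hm.pa j₁ j₂ ⋙' Hm.pa m₁ m₂, ?_⟩
            calc f ≈' c.tm ⋙' f' := hf
              _ ≈' c.tm ⋙' (D''.tm ⋙' Hm.pa m₁ m₂) := R.compCongrR _ hthin
              _ ≈' (c.tm ⋙' D''.tm) ⋙' Hm.pa m₁ m₂ := R.assoc' _ _ _
              _ ≈' (D₀.tm ⋙' Hm.pa j₁ j₂) ⋙' Hm.pa m₁ m₂ := R.compCongrL _ hcoh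
              _ ≈' D₀.tm ⋙' (Hm.pa j₁ j₂ ⋙' Hm.pa m₁ m₂) := R.assoc _ _ _
              _ ≈' D.tm ⋙' (Hm.pa j₁ j₂ ⋙' Hm.pa m₁ m₂) := R.compCongrL _ htm

end Syn
end LaxLDCoherence

namespace LaxLDCoherence
namespace Syn

variable {S : Type}

open PT Hm

theorem thin : ∀ (n : ℕ) {X Y : PT S} (f g : Hm X Y), X.size ≤ n → R f g := by
  intro n
  induction n using Nat.strong_induction_on with
  | _ n ih =>
  have hleaf : ∀ {s0 : S} {Y : PT S} (f g : Hm (PT.leaf s0) Y), R f g := by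
    intro s0 Y f g
    rcases f.decomp with ⟨h, hf⟩ | ⟨X', c, f', -⟩
    · rcases g.decomp with ⟨h', hg⟩ | ⟨X', c, g', -⟩
      · subst h
        exact R.trans hf (R.symm hg)
      · cases c
    · cases c
  have thinPa : ∀ {P₁ P₂ Q : PT S} (u u' : Hm (P₁.pa P₂) Q), (P₁.pa P₂).size ≤ n → R u u' := by
    intro P₁ P₂ Q u u' hsn
    have hq := u.size_eq
    have hp1 := PT.size_pos P₁
    have hp2 := PT.size_pos P₂
    match Q, u, u' with
    | PT.leaf _, u, u' =>
        simp [PT.size] at hq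
        omega
    | PT.ot _ _, u, u' => exact (no_pa_to_ot _ u (le_refl _)).elim
    | PT.pa Y₁ Y₂, u, u' =>
        have hy1 := PT.size_pos Y₁
        have hy2 := PT.size_pos Y₂
        have hb : P₁.size ≤ Y₁.size := bnd_mono_pa _ u (le_refl _)
        simp only [PT.size] at hq hsn
        rcases Nat.lt_or_ge P₁.size Y₁.size with hlt | hge
        · obtain ⟨U, V, w, v, v', hu⟩ := std_pa _ u hlt (le_refl _)
          obtain ⟨U', V', w2, v2, v2', hu'⟩ := std_pa _ u' hlt (le_refl _)
          have h1 := v.size_eq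
          have h2 := v2.size_eq
          simp only [PT.size] at h1 h2
          have hUsz : U'.size = U.size := by omega
          obtain ⟨A₀, B₀, Dw, ⟨k₁⟩, ⟨k₂⟩⟩ := phat_max _ w (le_refl _)
          obtain ⟨A₀', B₀', Dw', ⟨j₁⟩, ⟨j₂⟩⟩ := phat_max _ w2 (le_refl _)
          obtain ⟨hA, hB⟩ := Dw.det Dw' hUsz.symm
          subst hA; subst hB
          obtain ⟨hDb1, hDb2⟩ := Dw.bounds
          have hw : R w (Dw.tm ⋙' Hm.pa k₁ k₂) :=
            ih P₂.size (by omega) _ _ (le_refl _)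
          have hw2 : R w2 (Dw.tm ⋙' Hm.pa j₁ j₂) :=
            ih P₂.size (by omega) _ _ (le_refl _)
          have hv : R (Hm.pa (Hm.id P₁) k₁ ⋙' v) (Hm.pa (Hm.id P₁) j₁ ⋙' v2) := by
            refine ih (P₁.pa A₀).size ?_ _ _ (le_refl _)
            simp only [PT.size]; omega
          have hv' : R (k₂ ⋙' v') (j₂ ⋙' v2') := by
            refine ih B₀.size ?_ _ _ (le_refl _)
            omega
          calc u ≈' Hm.pa (Hm.id P₁) w ⋙' (Hm.pal P₁ U V ⋙' Hm.pa v v') := hu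
            _ ≈' Hm.pa (Hm.id P₁) (Dw.tm ⋙' Hm.pa k₁ k₂) ⋙' (Hm.pal P₁ U V ⋙' Hm.pa v v') :=
                R.compCongrL _ (R.paCongr (R.refl _) hw)
            _ ≈' Hm.pa (Hm.id P₁) Dw.tm ⋙' (Hm.pal P₁ A₀ B₀ ⋙'
                  Hm.pa (Hm.pa (Hm.id P₁) k₁ ⋙' v) (k₂ ⋙' v')) := R.chainAssemblePa _ _ _ _ _
            _ ≈' Hm.pa (Hm.id P₁) Dw.tm ⋙' (Hm.pal P₁ A₀ B₀ ⋙'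
                  Hm.pa (Hm.pa (Hm.id P₁) j₁ ⋙' v2) (j₂ ⋙' v2')) :=
                R.compCongrR _ (R.compCongrR _ (R.paCongr hv hv'))
            _ ≈' Hm.pa (Hm.id P₁) (Dw.tm ⋙' Hm.pa j₁ j₂) ⋙' (Hm.pal P₁ U' V' ⋙' Hm.pa v2 v2') :=
                R.symm (R.chainAssemblePa _ _ _ _ _)
            _ ≈' Hm.pa (Hm.id P₁) w2 ⋙' (Hm.pal P₁ U' V' ⋙' Hm.pa v2 v2') :=
                R.compCongrL _ (R.paCongr (R.refl _) (R.symm hw2))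
            _ ≈' u' := R.symm hu'
        · have heq : P₁.size = Y₁.size := le_antisymm hb hge
          obtain ⟨a, b, hu⟩ := prod_pa _ u heq (le_refl _)
          obtain ⟨a', b', hu'⟩ := prod_pa _ u' heq (le_refl _)
          have ha : R a a' := ih P₁.size (by omega) _ _ (le_refl _)
          have hbb : R b b' := ih P₂.size (by omega) _ _ (le_refl _)
          exact R.trans hu (R.trans (R.paCongr ha hbb) (R.symm hu'))
  intro X Y f g hn
  have hq := f.size_eq
  match X, Y, f, g with
  | PT.leaf s0, Y, f, g => exact hleaf f g
  | PT.pa X₁ X₂, Y, f, g => exact thinPa f g hn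
  | PT.ot X₁ X₂, PT.leaf _, f, g =>
      have := PT.size_pos X₁; have := PT.size_pos X₂
      simp [PT.size] at hq; omega
  | PT.ot X₁ X₂, PT.ot Y₁ Y₂, f, g =>
      have hx1 := PT.size_pos X₁
      have hx2 := PT.size_pos X₂
      have hy1 := PT.size_pos Y₁
      have hy2 := PT.size_pos Y₂
      have hb : X₁.size ≤ Y₁.size := bnd_mono_ot _ f (le_refl _)
      simp only [PT.size] at hq hn
      rcases Nat.lt_or_ge X₁.size Y₁.size with hlt | hge
      · obtain ⟨U, V, w, v, v', hu⟩ := std_ot _ f hlt (le_refl _)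
        obtain ⟨U', V', w2, v2, v2', hu'⟩ := std_ot _ g hlt (le_refl _)
        have h1 := v.size_eq
        have h2 := v2.size_eq
        simp only [PT.size] at h1 h2
        have hUsz : U'.size = U.size := by omega
        obtain ⟨A₀, B₀, Dw, ⟨k₁⟩, ⟨k₂⟩⟩ := ohat_max _ w (le_refl _)
        obtain ⟨A₀', B₀', Dw', ⟨j₁⟩, ⟨j₂⟩⟩ := ohat_max _ w2 (le_refl _)
        obtain ⟨hA, hB⟩ := Dw.det Dw' hUsz.symm
        subst hA; subst hB
        obtain ⟨hDb1, hDb2⟩ := Dw.bounds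
        have hw : R w (Dw.tm ⋙' Hm.ot k₁ k₂) :=
          ih X₂.size (by omega) _ _ (le_refl _)
        have hw2 : R w2 (Dw.tm ⋙' Hm.ot j₁ j₂) :=
          ih X₂.size (by omega) _ _ (le_refl _)
        have hv : R (Hm.ot (Hm.id X₁) k₁ ⋙' v) (Hm.ot (Hm.id X₁) j₁ ⋙' v2) := by
          refine ih (X₁.ot A₀).size ?_ _ _ (le_refl _)
          simp only [PT.size]; omega
        have hv' : R (k₂ ⋙' v') (j₂ ⋙' v2') := by
          refine ih B₀.size ?_ _ _ (le_refl _)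
          omega
        calc f ≈' Hm.ot (Hm.id X₁) w ⋙' (Hm.al X₁ U V ⋙' Hm.ot v v') := hu
          _ ≈' Hm.ot (Hm.id X₁) (Dw.tm ⋙' Hm.ot k₁ k₂) ⋙' (Hm.al X₁ U V ⋙' Hm.ot v v') :=
              R.compCongrL _ (R.otCongr (R.refl _) hw)
          _ ≈' Hm.ot (Hm.id X₁) Dw.tm ⋙' (Hm.al X₁ A₀ B₀ ⋙'
                Hm.ot (Hm.ot (Hm.id X₁) k₁ ⋙' v) (k₂ ⋙' v')) := R.chainAssembleOt _ _ _ _ _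
          _ ≈' Hm.ot (Hm.id X₁) Dw.tm ⋙' (Hm.al X₁ A₀ B₀ ⋙'
                Hm.ot (Hm.ot (Hm.id X₁) j₁ ⋙' v2) (j₂ ⋙' v2')) :=
              R.compCongrR _ (R.compCongrR _ (R.otCongr hv hv'))
          _ ≈' Hm.ot (Hm.id X₁) (Dw.tm ⋙' Hm.ot j₁ j₂) ⋙' (Hm.al X₁ U' V' ⋙' Hm.ot v2 v2') :=
              R.symm (R.chainAssembleOt _ _ _ _ _)
          _ ≈' Hm.ot (Hm.id X₁) w2 ⋙' (Hm.al X₁ U' V' ⋙' Hm.ot v2 v2') :=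
              R.compCongrL _ (R.otCongr (R.refl _) (R.symm hw2))
          _ ≈' g := R.symm hu'
      · have heq : X₁.size = Y₁.size := le_antisymm hb hge
        obtain ⟨a, b, hu⟩ := prod_ot _ f heq (le_refl _)
        obtain ⟨a', b', hu'⟩ := prod_ot _ g heq (le_refl _)
        have ha : R a a' := ih X₁.size (by omega) _ _ (le_refl _)
        have hbb : R b b' := ih X₂.size (by omega) _ _ (le_refl _)
        exact R.trans hu (R.trans (R.otCongr ha hbb) (R.symm hu'))
  | PT.ot X₁ X₂, PT.pa Y₁ Y₂, f, g =>
      obtain ⟨C₁, C₂, D, ⟨k₁⟩, ⟨k₂⟩⟩ := phat_max _ f (le_refl _)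
      obtain ⟨r, hfr⟩ := std3 n (fun u u' h => thinPa u u' h) _ f D (le_refl _) hn
      obtain ⟨r', hgr⟩ := std3 n (fun u u' h => thinPa u u' h) _ g D (le_refl _) hn
      have hr : R r r' := by
        refine thinPa r r' ?_
        obtain ⟨hb1, hb2⟩ := D.bounds
        have hx : X₁.size + X₂.size ≤ n := by simpa [PT.size] using hn
        simp only [PT.size] at hb2 ⊢
        omega
      exact R.trans hfr (R.trans (R.compCongrR _ hr) (R.symm hgr))

end Syn
end LaxLDCoherence

namespace LaxLDCoherence
namespace Syn

open PT Hm CategoryTheory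

variable {S : Type}

instance hmSetoid (X Y : PT S) : Setoid (Hm X Y) :=
  ⟨R, ⟨R.refl, R.symm, R.trans⟩⟩

/-- hom-sets of the free category: morphism terms modulo the congruence -/
def Q (X Y : PT S) : Type := Quotient (hmSetoid X Y)

def Q.mk {X Y : PT S} (f : Hm X Y) : Q X Y := Quotient.mk _ f

def Q.comp {X Y Z : PT S} : Q X Y → Q Y Z → Q X Z :=
  Quotient.lift₂ (fun f0 g0 => Q.mk (f0 ⋙' g0))
    (fun _ _ _ _ hf hg => Quotient.sound (R.compCongr hf hg))

instance instCatPT : Category.{0} (PT S) where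
  Hom := Q
  id X := Q.mk (Hm.id X)
  comp := Q.comp
  id_comp := by
    intro X Y f
    obtain ⟨f0⟩ := f
    exact Quotient.sound (R.idComp f0)
  comp_id := by
    intro X Y f
    obtain ⟨f0⟩ := f
    exact Quotient.sound (R.compId f0)
  assoc := by
    intro W X Y Z f g h
    obtain ⟨f0⟩ := f
    obtain ⟨g0⟩ := g
    obtain ⟨h0⟩ := h
    exact Quotient.sound (R.assoc f0 g0 h0)

def Q.ot {X₁ Y₁ X₂ Y₂ : PT S} : Q X₁ Y₁ → Q X₂ Y₂ → Q (X₁.ot X₂) (Y₁.ot Y₂) :=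
  Quotient.lift₂ (fun f0 g0 => Q.mk (Hm.ot f0 g0))
    (fun _ _ _ _ hf hg => Quotient.sound (R.otCongr hf hg))

def Q.pa {X₁ Y₁ X₂ Y₂ : PT S} : Q X₁ Y₁ → Q X₂ Y₂ → Q (X₁.pa X₂) (Y₁.pa Y₂) :=
  Quotient.lift₂ (fun f0 g0 => Q.mk (Hm.pa f0 g0))
    (fun _ _ _ _ hf hg => Quotient.sound (R.paCongr hf hg))

def instLaxPT : LaxLD (PT S) where
  ot := PT.ot
  pa := PT.pa
  otHom := Q.ot
  paHom := Q.pa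
  otHom_id := fun X Y => Quotient.sound (R.otId X Y)
  otHom_comp := by
    intro X₁ Y₁ Z₁ X₂ Y₂ Z₂ f₁ g₁ f₂ g₂
    obtain ⟨a⟩ := f₁; obtain ⟨b⟩ := g₁; obtain ⟨c⟩ := f₂; obtain ⟨d⟩ := g₂
    exact Quotient.sound (R.otComp a b c d)
  paHom_id := fun X Y => Quotient.sound (R.paId X Y)
  paHom_comp := by
    intro X₁ Y₁ Z₁ X₂ Y₂ Z₂ f₁ g₁ f₂ g₂
    obtain ⟨a⟩ := f₁; obtain ⟨b⟩ := g₁; obtain ⟨c⟩ := f₂; obtain ⟨d⟩ := g₂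
    exact Quotient.sound (R.paComp a b c d)
  α := fun A B C => Q.mk (Hm.al A B C)
  pα := fun A B C => Q.mk (Hm.pal A B C)
  δl := fun A B C => Q.mk (Hm.dl A B C)
  δr := fun A B C => Q.mk (Hm.dr A B C)
  α_natural := by
    intro A A' B B' E E' f g h
    obtain ⟨a⟩ := f; obtain ⟨b⟩ := g; obtain ⟨c⟩ := h
    exact Quotient.sound (R.natAl a b c)
  pα_natural := by
    intro A A' B B' E E' f g h
    obtain ⟨a⟩ := f; obtain ⟨b⟩ := g; obtain ⟨c⟩ := h
    exact Quotient.sound (R.natPal a b c)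
  δl_natural := by
    intro A A' B B' E E' f g h
    obtain ⟨a⟩ := f; obtain ⟨b⟩ := g; obtain ⟨c⟩ := h
    exact Quotient.sound (R.natDl a b c)
  δr_natural := by
    intro A A' B B' E E' f g h
    obtain ⟨a⟩ := f; obtain ⟨b⟩ := g; obtain ⟨c⟩ := h
    exact Quotient.sound (R.natDr a b c)
  P1 := fun A B E D => Quotient.sound (R.pent1 A B E D)
  P2 := fun A B E D => Quotient.sound (R.pent2 A B E D)
  P3 := fun A B E D => Quotient.sound (R.pent3 A B E D)
  P4 := fun A B E D => Quotient.sound (R.pent4 A B E D)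
  P5 := fun A B E D => Quotient.sound (R.pent5 A B E D)
  P6 := fun A B E D => Quotient.sound (R.pent6 A B E D)
  P7 := fun A B E D => Quotient.sound (R.pent7 A B E D)
  P8 := fun A B E D => Quotient.sound (R.pent8 A B E D)

/-- thinness of the syntactic free category -/
theorem Q.thin {X Y : PT S} (a b : Q X Y) : a = b := by
  obtain ⟨f0⟩ := a
  obtain ⟨g0⟩ := b
  exact Quotient.sound (Syn.thin X.size f0 g0 (le_refl _))

end Syn
end LaxLDCoherence

namespace LaxLDCoherence
namespace Syn

open PT Hm CategoryTheory

variable {S : Type}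

section Interp

variable {F : Type} [Category.{0} F] (LF : LaxLD F) (η : S → F)

def interp : PT S → F
  | PT.leaf s => η s
  | PT.ot a b => LF.ot (interp a) (interp b)
  | PT.pa a b => LF.pa (interp a) (interp b)

def ev : ∀ {X Y : PT S}, Hm X Y → (interp LF η X ⟶ interp LF η Y)
  | _, _, Hm.id X => 𝟙 _
  | _, _, Hm.comp f g => ev f ≫ ev g
  | _, _, Hm.ot f g => LF.otHom (ev f) (ev g)
  | _, _, Hm.pa f g => LF.paHom (ev f) (ev g)
  | _, _, Hm.al A B C => LF.α _ _ _
  | _, _, Hm.pal A B C => LF.pα _ _ _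
  | _, _, Hm.dl A B C => LF.δl _ _ _
  | _, _, Hm.dr A B C => LF.δr _ _ _

lemma ev_sound : ∀ {X Y : PT S} {f g : Hm X Y}, R f g → ev LF η f = ev LF η g := by
  intro X Y f g h
  induction h with
  | refl f => rfl
  | symm _ ih => exact ih.symm
  | trans _ _ ih1 ih2 => exact ih1.trans ih2
  | compCongr _ _ ih1 ih2 => simp only [ev, ih1, ih2]
  | otCongr _ _ ih1 ih2 => simp only [ev, ih1, ih2]; rfl
  | paCongr _ _ ih1 ih2 => simp only [ev, ih1, ih2]; rfl
  | idComp f => simp only [ev, Category.id_comp]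
  | compId f => simp only [ev, Category.comp_id]
  | assoc f g h => simp only [ev, Category.assoc]
  | otId X Y => exact LF.otHom_id _ _
  | otComp f₁ g₁ f₂ g₂ => exact LF.otHom_comp _ _ _ _
  | paId X Y => exact LF.paHom_id _ _
  | paComp f₁ g₁ f₂ g₂ => exact LF.paHom_comp _ _ _ _
  | natAl f g h => exact LF.α_natural _ _ _
  | natPal f g h => exact LF.pα_natural _ _ _
  | natDl f g h => exact LF.δl_natural _ _ _
  | natDr f g h => exact LF.δr_natural _ _ _
  | pent1 A B C D => exact LF.P1 _ _ _ _
  | pent2 A B C D => exact LF.P2 _ _ _ _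
  | pent3 A B C D => exact LF.P3 _ _ _ _
  | pent4 A B C D => exact LF.P4 _ _ _ _
  | pent5 A B C D => exact LF.P5 _ _ _ _
  | pent6 A B C D => exact LF.P6 _ _ _ _
  | pent7 A B C D => exact LF.P7 _ _ _ _
  | pent8 A B C D => exact LF.P8 _ _ _ _

def Hfun : PT S ⥤ F where
  obj := interp LF η
  map := Quotient.lift (fun f0 => ev LF η f0) (fun _ _ h => ev_sound LF η h)
  map_id := fun X => rfl
  map_comp := by
    intro X Y Z f g
    obtain ⟨f0⟩ := f
    obtain ⟨g0⟩ := g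
    rfl

def Hstrict : StrictLaxLDFunctor (PT S) F (instLaxPT) LF where
  toFunctor := Hfun LF η
  obj_ot := fun X Y => rfl
  obj_pa := fun X Y => rfl
  map_ot := by
    intro X₁ Y₁ X₂ Y₂ f g
    obtain ⟨f0⟩ := f
    obtain ⟨g0⟩ := g
    show _ = 𝟙 _ ≫ _ ≫ 𝟙 _
    refine Eq.trans ?_ ((Category.id_comp _).trans (Category.comp_id _)).symm
    rfl
  map_pa := by
    intro X₁ Y₁ X₂ Y₂ f g
    obtain ⟨f0⟩ := f
    obtain ⟨g0⟩ := g
    show _ = 𝟙 _ ≫ _ ≫ 𝟙 _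
    refine Eq.trans ?_ ((Category.id_comp _).trans (Category.comp_id _)).symm
    rfl
  map_α := by
    intro A B E
    show _ = 𝟙 _ ≫ _ ≫ 𝟙 _
    refine Eq.trans ?_ ((Category.id_comp _).trans (Category.comp_id _)).symm
    rfl
  map_pα := by
    intro A B E
    show _ = 𝟙 _ ≫ _ ≫ 𝟙 _
    refine Eq.trans ?_ ((Category.id_comp _).trans (Category.comp_id _)).symm
    rfl
  map_δl := by
    intro A B E
    show _ = 𝟙 _ ≫ _ ≫ 𝟙 _
    refine Eq.trans ?_ ((Category.id_comp _).trans (Category.comp_id _)).symm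
    rfl
  map_δr := by
    intro A B E
    show _ = 𝟙 _ ≫ _ ≫ 𝟙 _
    refine Eq.trans ?_ ((Category.id_comp _).trans (Category.comp_id _)).symm
    rfl

end Interp

end Syn
end LaxLDCoherence

namespace LaxLDCoherence

open CategoryTheory

/-- the identity strict functor -/
def idStrict {F : Type} [Category.{0} F] (LF : LaxLD F) : StrictLaxLDFunctor F F LF LF where
  toFunctor := Functor.id F
  obj_ot := fun _ _ => rfl
  obj_pa := fun _ _ => rfl
  map_ot := by intros; simp
  map_pa := by intros; simp
  map_α := by intros; simp
  map_pα := by intros; simp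
  map_δl := by intros; simp
  map_δr := by intros; simp

theorem free_unitless_lax_LD_category_is_thin'
    (S : Type) (F : Type) [Category.{0} F] (LF : LaxLD F) (η : S → F)
    (hfree : ∀ (E : Type) [instE : Category.{0} E] (LE : LaxLD E) (f : S → E),
      ∃ G : StrictLaxLDFunctor F E LF LE,
        (∀ s : S, G.toFunctor.obj (η s) = f s) ∧
        ∀ G' : StrictLaxLDFunctor F E LF LE,
          (∀ s : S, G'.toFunctor.obj (η s) = f s) → G'.toFunctor = G.toFunctor) :
    ∀ (X Y : F) (g h : X ⟶ Y), g = h := by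
  intro X Y g h
  obtain ⟨G, hGobj, -⟩ := hfree (Syn.PT S) Syn.instLaxPT Syn.PT.leaf
  obtain ⟨G₀, hG₀obj, huniq⟩ := hfree F LF η
  let HS : StrictLaxLDFunctor (Syn.PT S) F Syn.instLaxPT LF := Syn.Hstrict LF η
  have hobjot : ∀ P Q : F,
      (G.toFunctor ⋙ HS.toFunctor).obj (LF.ot P Q) =
        LF.ot ((G.toFunctor ⋙ HS.toFunctor).obj P) ((G.toFunctor ⋙ HS.toFunctor).obj Q) := by
    intro P Q
    show HS.toFunctor.obj (G.toFunctor.obj (LF.ot P Q)) = _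
    rw [G.obj_ot]
    rfl
  have hobjpa : ∀ P Q : F,
      (G.toFunctor ⋙ HS.toFunctor).obj (LF.pa P Q) =
        LF.pa ((G.toFunctor ⋙ HS.toFunctor).obj P) ((G.toFunctor ⋙ HS.toFunctor).obj Q) := by
    intro P Q
    show HS.toFunctor.obj (G.toFunctor.obj (LF.pa P Q)) = _
    rw [G.obj_pa]
    rfl
  let CS : StrictLaxLDFunctor F F LF LF :=
    { toFunctor := G.toFunctor ⋙ HS.toFunctor
      obj_ot := hobjot
      obj_pa := hobjpa
      map_ot := by
        intro X₁ Y₁ X₂ Y₂ f g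
        show HS.toFunctor.map (G.toFunctor.map (LF.otHom f g)) = _
        rw [G.map_ot, Functor.map_comp, Functor.map_comp, eqToHom_map, eqToHom_map,
          HS.map_ot]
        simp [eqToHom_map, eqToHom_trans]
      map_pa := by
        intro X₁ Y₁ X₂ Y₂ f g
        show HS.toFunctor.map (G.toFunctor.map (LF.paHom f g)) = _
        rw [G.map_pa, Functor.map_comp, Functor.map_comp, eqToHom_map, eqToHom_map,
          HS.map_pa]
        simp [eqToHom_map, eqToHom_trans]
      map_α := by
        intro A B E
        show HS.toFunctor.map (G.toFunctor.map (LF.α A B E)) = _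
        rw [G.map_α, Functor.map_comp, Functor.map_comp, eqToHom_map, eqToHom_map,
          HS.map_α]
        simp [eqToHom_map, eqToHom_trans]
      map_pα := by
        intro A B E
        show HS.toFunctor.map (G.toFunctor.map (LF.pα A B E)) = _
        rw [G.map_pα, Functor.map_comp, Functor.map_comp, eqToHom_map, eqToHom_map,
          HS.map_pα]
        simp [eqToHom_map, eqToHom_trans]
      map_δl := by
        intro A B E
        show HS.toFunctor.map (G.toFunctor.map (LF.δl A B E)) = _
        rw [G.map_δl, Functor.map_comp, Functor.map_comp, eqToHom_map, eqToHom_map,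
          HS.map_δl]
        simp [eqToHom_map, eqToHom_trans]
      map_δr := by
        intro A B E
        show HS.toFunctor.map (G.toFunctor.map (LF.δr A B E)) = _
        rw [G.map_δr, Functor.map_comp, Functor.map_comp, eqToHom_map, eqToHom_map,
          HS.map_δr]
        simp [eqToHom_map, eqToHom_trans] }
  have hCobj : ∀ s : S, CS.toFunctor.obj (η s) = η s := by
    intro s
    show HS.toFunctor.obj (G.toFunctor.obj (η s)) = η s
    rw [hGobj]
    rfl
  have hI : (idStrict LF).toFunctor = G₀.toFunctor := huniq _ (fun _ => rfl)
  have hC : CS.toFunctor = G₀.toFunctor := huniq _ hCobj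
  have hEq : CS.toFunctor = Functor.id F := hC.trans hI.symm
  have hqthin : G.toFunctor.map g = G.toFunctor.map h := Syn.Q.thin _ _
  have e1 : CS.toFunctor.map g = CS.toFunctor.map h := by
    show HS.toFunctor.map (G.toFunctor.map g) = HS.toFunctor.map (G.toFunctor.map h)
    rw [hqthin]
  have hmapg := Functor.congr_hom hEq g
  have hmaph := Functor.congr_hom hEq h
  rw [hmapg, hmaph] at e1
  have e2 := congrArg
    (fun z => eqToHom (Functor.congr_obj hEq X).symm ≫ z ≫ eqToHom (Functor.congr_obj hEq Y))
    e1
  simpa using e2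

end LaxLDCoherence


namespace LaxLDCoherence

/-- **Coherence theorem for unitless lax linearly distributive categories**:
the free unitless lax LD category on a set `S` is thin. -/
theorem free_unitless_lax_LD_category_is_thin
    (S : Type) (F : Type) [Category.{0} F] (LF : LaxLD F) (η : S → F)
    (hfree : ∀ (E : Type) [instE : Category.{0} E] (LE : LaxLD E) (f : S → E),
      ∃ G : StrictLaxLDFunctor F E LF LE,
        (∀ s : S, G.toFunctor.obj (η s) = f s) ∧
        ∀ G' : StrictLaxLDFunctor F E LF LE,
          (∀ s : S, G'.toFunctor.obj (η s) = f s) → G'.toFunctor = G.toFunctor) :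
    ∀ (X Y : F) (g h : X ⟶ Y), g = h := by
  intro X Y g h
  exact free_unitless_lax_LD_category_is_thin' S F LF η hfree X Y g h

end LaxLDCoherence
end

section
/- In a tidy LD category C, for every morphism f : H → L⊗R into an ⊗-product, the family (τ^f_u)_{u∈𝔜} satisfies the following six relations, as equalities of composites of components for all words u ∈ 𝔜 and all vectors of objects: (1) τ^f_{a·u}∘α = (α⊗id)∘τ^f_{a·a·u}, explicitly τ^f_{a·u}(A₁⊗A₂, Ā)∘α_{A₁,A₂,H^f_u(Ā)} = (α_{A₁,A₂,L^f_u(Ā)}⊗id_{R^f_u(Ā)})∘τ^f_{a·a·u}(A₁,A₂,Ā) for all objects A₁,A₂ and Ā ∈ Ob(C)^{|u|}; (2) τ^f_{a⁻¹·a·u}∘α = τ^f_{a·a⁻¹·u}; (3) τ^f_{a⁻¹·a⁻¹·u}∘α = (id⊗α)∘τ^f_{a⁻¹·u}; (4) τ^f_{a⁻¹·u}∘α⁻¹ = (id⊗α⁻¹)∘τ^f_{a⁻¹·a⁻¹·u}; (5) τ^f_{a·a⁻¹·u}∘α⁻¹ = τ^f_{a⁻¹·a·u}; (6) τ^f_{a·a·u}∘α⁻¹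 = (α⁻¹⊗id)∘τ^f_{a·u}; in (2)–(6) the components of α, α⁻¹ and the identities are the evident ones making both sides parallel morphisms. -/
open CategoryTheory

namespace LDCoherence

universe v u v₁ u₁ v₂ u₂

/-- A (unitless) linearly distributive category structure on a category `C`. -/
structure LD (C : Type u) [Category.{v} C] where
  ot : C → C → C
  pa : C → C → C
  otHom : ∀ {X₁ Y₁ X₂ Y₂ : C}, (X₁ ⟶ Y₁) → (X₂ ⟶ Y₂) → (ot X₁ X₂ ⟶ ot Y₁ Y₂)
  paHom : ∀ {X₁ Y₁ X₂ Y₂ : C}, (X₁ ⟶ Y₁) → (X₂ ⟶ Y₂) → (pa X₁ X₂ ⟶ pa Y₁ Y₂)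
  otHom_id : ∀ X Y : C, otHom (𝟙 X) (𝟙 Y) = 𝟙 (ot X Y)
  otHom_comp :
    ∀ {X₁ Y₁ Z₁ X₂ Y₂ Z₂ : C} (f₁ : X₁ ⟶ Y₁) (g₁ : Y₁ ⟶ Z₁) (f₂ : X₂ ⟶ Y₂) (g₂ : Y₂ ⟶ Z₂),
      otHom (f₁ ≫ g₁) (f₂ ≫ g₂) = otHom f₁ f₂ ≫ otHom g₁ g₂
  paHom_id : ∀ X Y : C, paHom (𝟙 X) (𝟙 Y) = 𝟙 (pa X Y)
  paHom_comp :
    ∀ {X₁ Y₁ Z₁ X₂ Y₂ Z₂ : C} (f₁ : X₁ ⟶ Y₁) (g₁ : Y₁ ⟶ Z₁) (f₂ : X₂ ⟶ Y₂) (g₂ : Y₂ ⟶ Z₂),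
      paHom (f₁ ≫ g₁) (f₂ ≫ g₂) = paHom f₁ f₂ ≫ paHom g₁ g₂
  α : ∀ A B E : C, ot A (ot B E) ⟶ ot (ot A B) E
  αInv : ∀ A B E : C, ot (ot A B) E ⟶ ot A (ot B E)
  pα : ∀ A B E : C, pa A (pa B E) ⟶ pa (pa A B) E
  pαInv : ∀ A B E : C, pa (pa A B) E ⟶ pa A (pa B E)
  δl : ∀ A B E : C, ot A (pa B E) ⟶ pa (ot A B) E
  δr : ∀ A B E : C, ot (pa A B) E ⟶ pa A (ot B E)
  α_αInv : ∀ A B E : C, α A B E ≫ αInv A B E = 𝟙 _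
  αInv_α : ∀ A B E : C, αInv A B E ≫ α A B E = 𝟙 _
  pα_pαInv : ∀ A B E : C, pα A B E ≫ pαInv A B E = 𝟙 _
  pαInv_pα : ∀ A B E : C, pαInv A B E ≫ pα A B E = 𝟙 _
  α_natural :
    ∀ {A A' B B' E E' : C} (f : A ⟶ A') (g : B ⟶ B') (h : E ⟶ E'),
      otHom f (otHom g h) ≫ α A' B' E' = α A B E ≫ otHom (otHom f g) h
  pα_natural :
    ∀ {A A' B B' E E' : C} (f : A ⟶ A') (g : B ⟶ B') (h : E ⟶ E'),
      paHom f (paHom g h) ≫ pα A' B' E' = pα A B E ≫ paHom (paHom f g) h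
  δl_natural :
    ∀ {A A' B B' E E' : C} (f : A ⟶ A') (g : B ⟶ B') (h : E ⟶ E'),
      otHom f (paHom g h) ≫ δl A' B' E' = δl A B E ≫ paHom (otHom f g) h
  δr_natural :
    ∀ {A A' B B' E E' : C} (f : A ⟶ A') (g : B ⟶ B') (h : E ⟶ E'),
      otHom (paHom f g) h ≫ δr A' B' E' = δr A B E ≫ paHom f (otHom g h)
  P1 : ∀ A B E D : C,
    α A B (ot E D) ≫ α (ot A B) E D =
      otHom (𝟙 A) (α B E D) ≫ α A (ot B E) D ≫ otHom (α A B E) (𝟙 D)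
  P2 : ∀ A B E D : C,
    α A B (pa E D) ≫ δl (ot A B) E D =
      otHom (𝟙 A) (δl B E D) ≫ δl A (ot B E) D ≫ paHom (α A B E) (𝟙 D)
  P3 : ∀ A B E D : C,
    otHom (𝟙 A) (δr B E D) ≫ δl A B (ot E D) =
      α A (pa B E) D ≫ otHom (δl A B E) (𝟙 D) ≫ δr (ot A B) E D
  P4 : ∀ A B E D : C,
    δl A B (pa E D) ≫ pα (ot A B) E D =
      otHom (𝟙 A) (pα B E D) ≫ δl A (pa B E) D ≫ paHom (δl A B E) (𝟙 D)
  P5 : ∀ A B E D : C,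
    δr A B (ot E D) ≫ paHom (𝟙 A) (α B E D) =
      α (pa A B) E D ≫ otHom (δr A B E) (𝟙 D) ≫ δr A (ot B E) D
  P6 : ∀ A B E D : C,
    δl (pa A B) E D ≫ paHom (δr A B E) (𝟙 D) =
      δr A B (pa E D) ≫ paHom (𝟙 A) (δl B E D) ≫ pα A (ot B E) D
  P7 : ∀ A B E D : C,
    otHom (pα A B E) (𝟙 D) ≫ δr (pa A B) E D =
      δr A (pa B E) D ≫ paHom (𝟙 A) (δr B E D) ≫ pα A B (ot E D)
  P8 : ∀ A B E D : C,
    pα A B (pa E D) ≫ pα (pa A B) E D =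
      paHom (𝟙 A) (pα B E D) ≫ pα A (pa B E) D ≫ paHom (pα A B E) (𝟙 D)

variable {C : Type u} [Category.{v} C]

/-- Tidiness of a linearly distributive category. -/
def LD.Tidy (L : LD C) : Prop :=
  (∀ A₁ A₂ B₁ B₂ : C, L.ot A₁ A₂ = L.ot B₁ B₂ → A₁ = B₁ ∧ A₂ = B₂) ∧
  (∀ A₁ A₂ B₁ B₂ : C, L.pa A₁ A₂ = L.pa B₁ B₂ → A₁ = B₁ ∧ A₂ = B₂) ∧
  (∀ A₁ A₂ B₁ B₂ : C, L.ot A₁ A₂ ≠ L.pa B₁ B₂)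

/-- Generators of the free monoid 𝔜. -/
inductive YGen : Type
  | a : YGen
  | ainv : YGen

/-- Generators of the free monoid 𝔝. -/
inductive ZGen : Type
  | pa : ZGen
  | painv : ZGen
  | dl : ZGen
  | dr : ZGen

/-- A word in the free monoid 𝔜 together with a matching vector of objects:
each letter carries the object of the vector that it consumes in the recursions
defining `H`, `L`, `R` and `τ`.  The outermost constructor is the terminal letter. -/
inductive YW (C : Type u) : Type u
  | nil : YW C
  | a : C → YW C → YW C
  | ainv : C → YW C → YW C

/-- The underlying word in 𝔜 of a word-with-vector. -/
def YW.word {C : Type u} : YW C → List YGen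
  | .nil => []
  | .a _ w => YGen.a :: w.word
  | .ainv _ w => YGen.ainv :: w.word

/-- A word in the free monoid 𝔝 together with a matching vector of objects. -/
inductive ZW (C : Type u) : Type u
  | nil : ZW C
  | pa : C → ZW C → ZW C
  | painv : C → ZW C → ZW C
  | dl : C → ZW C → ZW C
  | dr : C → ZW C → ZW C

/-- The underlying word in 𝔝 of a word-with-vector. -/
def ZW.word {C : Type u} : ZW C → List ZGen
  | .nil => []
  | .pa _ w => ZGen.pa :: w.word
  | .painv _ w => ZGen.painv :: w.word
  | .dl _ w => ZGen.dl :: w.word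
  | .dr _ w => ZGen.dr :: w.word

/-- The functor `H^f_u` (object part), for `f` with source `X` and target an ⊗-product. -/
def Hot (L : LD C) (X : C) : YW C → C
  | .nil => X
  | .a A w => L.ot A (Hot L X w)
  | .ainv A w => L.ot (Hot L X w) A

/-- The functor `L^f_u` (object part), for `f` with target `L.ot Y Z`. -/
def Lot (L : LD C) (Y : C) : YW C → C
  | .nil => Y
  | .a A w => L.ot A (Lot L Y w)
  | .ainv _ w => Lot L Y w

/-- The functor `R^f_u` (object part), for `f` with target `L.ot Y Z`. -/
def Rot (L : LD C) (Z : C) : YW C → C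
  | .nil => Z
  | .a _ w => Rot L Z w
  | .ainv A w => L.ot (Rot L Z w) A

/-- The natural transformation `τ^f_u` (componentwise). -/
def tau (L : LD C) {X Y Z : C} (f : X ⟶ L.ot Y Z) :
    (w : YW C) → (Hot L X w ⟶ L.ot (Lot L Y w) (Rot L Z w))
  | .nil => f
  | .a A w => L.otHom (𝟙 A) (tau L f w) ≫ L.α A (Lot L Y w) (Rot L Z w)
  | .ainv A w => L.otHom (tau L f w) (𝟙 A) ≫ L.αInv (Lot L Y w) (Rot L Z w) A

/-- The functor `H^f_u` (object part), for `f` with source `X` and target a ⅋-product. -/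
def Hpa (L : LD C) (X : C) : ZW C → C
  | .nil => X
  | .pa A w => L.pa A (Hpa L X w)
  | .painv A w => L.pa (Hpa L X w) A
  | .dl A w => L.ot A (Hpa L X w)
  | .dr A w => L.ot (Hpa L X w) A

/-- The functor `L^f_u` (object part), for `f` with target `L.pa Y Z`. -/
def Lpa (L : LD C) (Y : C) : ZW C → C
  | .nil => Y
  | .pa A w => L.pa A (Lpa L Y w)
  | .painv _ w => Lpa L Y w
  | .dl A w => L.ot A (Lpa L Y w)
  | .dr _ w => Lpa L Y w

/-- The functor `R^f_u` (object part), for `f` with target `L.pa Y Z`. -/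
def Rpa (L : LD C) (Z : C) : ZW C → C
  | .nil => Z
  | .pa _ w => Rpa L Z w
  | .painv A w => L.pa (Rpa L Z w) A
  | .dl _ w => Rpa L Z w
  | .dr A w => L.ot (Rpa L Z w) A

/-- The natural transformation `κ^f_u` (componentwise). -/
def kappa (L : LD C) {X Y Z : C} (f : X ⟶ L.pa Y Z) :
    (w : ZW C) → (Hpa L X w ⟶ L.pa (Lpa L Y w) (Rpa L Z w))
  | .nil => f
  | .pa A w => L.paHom (𝟙 A) (kappa L f w) ≫ L.pα A (Lpa L Y w) (Rpa L Z w)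
  | .painv A w => L.paHom (kappa L f w) (𝟙 A) ≫ L.pαInv (Lpa L Y w) (Rpa L Z w) A
  | .dl A w => L.otHom (𝟙 A) (kappa L f w) ≫ L.δl A (Lpa L Y w) (Rpa L Z w)
  | .dr A w => L.otHom (kappa L f w) (𝟙 A) ≫ L.δr (Lpa L Y w) (Rpa L Z w) A

/-- `h` is a component of the associator `α`. -/
def IsAlphaComp (L : LD C) {W T : C} (h : W ⟶ T) : Prop :=
  ∃ (A B E : C) (h₁ : W = L.ot A (L.ot B E)) (h₂ : L.ot (L.ot A B) E = T),
    h = eqToHom h₁ ≫ L.α A B E ≫ eqToHom h₂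

/-- `h` is a component of the inverse associator `α⁻¹`. -/
def IsAlphaInvComp (L : LD C) {W T : C} (h : W ⟶ T) : Prop :=
  ∃ (A B E : C) (h₁ : W = L.ot (L.ot A B) E) (h₂ : L.ot A (L.ot B E) = T),
    h = eqToHom h₁ ≫ L.αInv A B E ≫ eqToHom h₂

/-- `h` is a component of the associator `ᾱ`. -/
def IsPalphaComp (L : LD C) {W T : C} (h : W ⟶ T) : Prop :=
  ∃ (A B E : C) (h₁ : W = L.pa A (L.pa B E)) (h₂ : L.pa (L.pa A B) E = T),
    h = eqToHom h₁ ≫ L.pα A B E ≫ eqToHom h₂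

/-- `h` is a component of the inverse associator `ᾱ⁻¹`. -/
def IsPalphaInvComp (L : LD C) {W T : C} (h : W ⟶ T) : Prop :=
  ∃ (A B E : C) (h₁ : W = L.pa (L.pa A B) E) (h₂ : L.pa A (L.pa B E) = T),
    h = eqToHom h₁ ≫ L.pαInv A B E ≫ eqToHom h₂

/-- `h` is a component of the left distributor `δˡ`. -/
def IsDlComp (L : LD C) {W T : C} (h : W ⟶ T) : Prop :=
  ∃ (A B E : C) (h₁ : W = L.ot A (L.pa B E)) (h₂ : L.pa (L.ot A B) E = T),
    h = eqToHom h₁ ≫ L.δl A B E ≫ eqToHom h₂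

/-- `h` is a component of the right distributor `δʳ`. -/
def IsDrComp (L : LD C) {W T : C} (h : W ⟶ T) : Prop :=
  ∃ (A B E : C) (h₁ : W = L.ot (L.pa A B) E) (h₂ : L.pa A (L.ot B E) = T),
    h = eqToHom h₁ ≫ L.δr A B E ≫ eqToHom h₂

/-- `h` is of the form `id_A ⅋ h'` for some morphism `h'`. -/
def IsIdPaLeft (L : LD C) {W T : C} (h : W ⟶ T) : Prop :=
  ∃ (A W' T' : C) (h' : W' ⟶ T') (h₁ : W = L.pa A W') (h₂ : L.pa A T' = T),
    h = eqToHom h₁ ≫ L.paHom (𝟙 A) h' ≫ eqToHom h₂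

/-- `h` is of the form `h' ⅋ id_A` for some morphism `h'`. -/
def IsIdPaRight (L : LD C) {W T : C} (h : W ⟶ T) : Prop :=
  ∃ (A W' T' : C) (h' : W' ⟶ T') (h₁ : W = L.pa W' A) (h₂ : L.pa T' A = T),
    h = eqToHom h₁ ≫ L.paHom h' (𝟙 A) ≫ eqToHom h₂

/-- The set `Id^⊗` of identities of ⊗-products, as a set of morphisms into ⊗-products. -/
def IdOtSet (L : LD C) ⦃X Y Z : C⦄ (f : X ⟶ L.ot Y Z) : Prop :=
  ∃ hE : X = L.ot Y Z, f = eqToHom hE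

/-- The set `Id^⅋` of identities of ⅋-products, as a set of morphisms into ⅋-products. -/
def IdPaSet (L : LD C) ⦃X Y Z : C⦄ (f : X ⟶ L.pa Y Z) : Prop :=
  ∃ hE : X = L.pa Y Z, f = eqToHom hE

/-- `𝔣`-analysability for a set `𝔣` of morphisms whose targets are ⊗-products:
`g = (g' ⊗ g'') ∘ τ^f_u(Ā)` for some `f ∈ 𝔣`, word `u`, vector `Ā` and morphisms `g', g''`. -/
def OtAnalysable (L : LD C) (𝔣 : ∀ ⦃X Y Z : C⦄, (X ⟶ L.ot Y Z) → Prop)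
    {P T : C} (g : P ⟶ T) : Prop :=
  ∃ (X Y Z : C) (f : X ⟶ L.ot Y Z), 𝔣 f ∧
    ∃ (w : YW C) (Q₁ Q₂ : C) (g' : Lot L Y w ⟶ Q₁) (g'' : Rot L Z w ⟶ Q₂)
      (hP : P = Hot L X w) (hT : L.ot Q₁ Q₂ = T),
      g = eqToHom hP ≫ tau L f w ≫ L.otHom g' g'' ≫ eqToHom hT

/-- `𝔣`-analysability for a set `𝔣` of morphisms whose targets are ⅋-products:
`g = (g' ⅋ g'') ∘ κ^f_u(Ā)` for some `f ∈ 𝔣`, word `u`, vector `Ā` and morphisms `g', g''`. -/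
def PaAnalysable (L : LD C) (𝔣 : ∀ ⦃X Y Z : C⦄, (X ⟶ L.pa Y Z) → Prop)
    {P T : C} (g : P ⟶ T) : Prop :=
  ∃ (X Y Z : C) (f : X ⟶ L.pa Y Z), 𝔣 f ∧
    ∃ (w : ZW C) (Q₁ Q₂ : C) (g' : Lpa L Y w ⟶ Q₁) (g'' : Rpa L Z w ⟶ Q₂)
      (hP : P = Hpa L X w) (hT : L.pa Q₁ Q₂ = T),
      g = eqToHom hP ≫ kappa L f w ≫ L.paHom g' g'' ≫ eqToHom hT

/-- Atomic morphisms of a (tidy) LD category. -/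
inductive Atomic (L : LD C) : ∀ {W T : C}, (W ⟶ T) → Prop
  | alpha (A B E : C) : Atomic L (L.α A B E)
  | alphaInv (A B E : C) : Atomic L (L.αInv A B E)
  | palpha (A B E : C) : Atomic L (L.pα A B E)
  | palphaInv (A B E : C) : Atomic L (L.pαInv A B E)
  | dl (A B E : C) : Atomic L (L.δl A B E)
  | dr (A B E : C) : Atomic L (L.δr A B E)
  | otRightId {W T : C} (f : W ⟶ T) (A : C) : Atomic L f → Atomic L (L.otHom f (𝟙 A))
  | otLeftId {W T : C} (f : W ⟶ T) (A : C) : Atomic L f → Atomic L (L.otHom (𝟙 A) f)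
  | paRightId {W T : C} (f : W ⟶ T) (A : C) : Atomic L f → Atomic L (L.paHom f (𝟙 A))
  | paLeftId {W T : C} (f : W ⟶ T) (A : C) : Atomic L f → Atomic L (L.paHom (𝟙 A) f)

/-- Elementary morphisms: identities and finite composites of atomic morphisms. -/
inductive Elementary (L : LD C) : ∀ {W T : C}, (W ⟶ T) → Prop
  | id (X : C) : Elementary L (𝟙 X)
  | of {W T : C} {f : W ⟶ T} : Atomic L f → Elementary L f
  | comp {W T U : C} {f : W ⟶ T} {g : T ⟶ U} :
      Elementary L f → Elementary L g → Elementary L (f ≫ g)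

/-- A strict Frobenius linearly distributive functor between LD categories. -/
structure StrictLDFunctor (Cc : Type u₁) [Category.{v₁} Cc] (Dd : Type u₂) [Category.{v₂} Dd]
    (LC : LD Cc) (LDd : LD Dd) where
  toFunctor : Cc ⥤ Dd
  obj_ot : ∀ X Y : Cc, toFunctor.obj (LC.ot X Y) = LDd.ot (toFunctor.obj X) (toFunctor.obj Y)
  obj_pa : ∀ X Y : Cc, toFunctor.obj (LC.pa X Y) = LDd.pa (toFunctor.obj X) (toFunctor.obj Y)
  map_ot : ∀ {X₁ Y₁ X₂ Y₂ : Cc} (f : X₁ ⟶ Y₁) (g : X₂ ⟶ Y₂),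
    toFunctor.map (LC.otHom f g) =
      eqToHom (obj_ot X₁ X₂) ≫ LDd.otHom (toFunctor.map f) (toFunctor.map g) ≫
        eqToHom (obj_ot Y₁ Y₂).symm
  map_pa : ∀ {X₁ Y₁ X₂ Y₂ : Cc} (f : X₁ ⟶ Y₁) (g : X₂ ⟶ Y₂),
    toFunctor.map (LC.paHom f g) =
      eqToHom (obj_pa X₁ X₂) ≫ LDd.paHom (toFunctor.map f) (toFunctor.map g) ≫
        eqToHom (obj_pa Y₁ Y₂).symm
  map_α : ∀ A B E : Cc,
    toFunctor.map (LC.α A B E) =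
      eqToHom (by simp only [obj_ot]) ≫
        LDd.α (toFunctor.obj A) (toFunctor.obj B) (toFunctor.obj E) ≫
        eqToHom (by simp only [obj_ot])
  map_αInv : ∀ A B E : Cc,
    toFunctor.map (LC.αInv A B E) =
      eqToHom (by simp only [obj_ot]) ≫
        LDd.αInv (toFunctor.obj A) (toFunctor.obj B) (toFunctor.obj E) ≫
        eqToHom (by simp only [obj_ot])
  map_pα : ∀ A B E : Cc,
    toFunctor.map (LC.pα A B E) =
      eqToHom (by simp only [obj_pa]) ≫
        LDd.pα (toFunctor.obj A) (toFunctor.obj B) (toFunctor.obj E) ≫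
        eqToHom (by simp only [obj_pa])
  map_pαInv : ∀ A B E : Cc,
    toFunctor.map (LC.pαInv A B E) =
      eqToHom (by simp only [obj_pa]) ≫
        LDd.pαInv (toFunctor.obj A) (toFunctor.obj B) (toFunctor.obj E) ≫
        eqToHom (by simp only [obj_pa])
  map_δl : ∀ A B E : Cc,
    toFunctor.map (LC.δl A B E) =
      eqToHom (by simp only [obj_ot, obj_pa]) ≫
        LDd.δl (toFunctor.obj A) (toFunctor.obj B) (toFunctor.obj E) ≫
        eqToHom (by simp only [obj_ot, obj_pa])
  map_δr : ∀ A B E : Cc,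
    toFunctor.map (LC.δr A B E) =
      eqToHom (by simp only [obj_ot, obj_pa]) ≫
        LDd.δr (toFunctor.obj A) (toFunctor.obj B) (toFunctor.obj E) ≫
        eqToHom (by simp only [obj_ot, obj_pa])

/-- A (unitless) Frobenius linearly distributive functor between LD categories. -/
structure FrobLDFunctor (Cc : Type u₁) [Category.{v₁} Cc] (Dd : Type u₂) [Category.{v₂} Dd]
    (LC : LD Cc) (LDd : LD Dd) where
  toFunctor : Cc ⥤ Dd
  μ : ∀ X Y : Cc, LDd.ot (toFunctor.obj X) (toFunctor.obj Y) ⟶ toFunctor.obj (LC.ot X Y)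
  Δ : ∀ X Y : Cc, toFunctor.obj (LC.pa X Y) ⟶ LDd.pa (toFunctor.obj X) (toFunctor.obj Y)
  μ_natural : ∀ {X₁ Y₁ X₂ Y₂ : Cc} (f : X₁ ⟶ Y₁) (g : X₂ ⟶ Y₂),
    LDd.otHom (toFunctor.map f) (toFunctor.map g) ≫ μ Y₁ Y₂ =
      μ X₁ X₂ ≫ toFunctor.map (LC.otHom f g)
  Δ_natural : ∀ {X₁ Y₁ X₂ Y₂ : Cc} (f : X₁ ⟶ Y₁) (g : X₂ ⟶ Y₂),
    toFunctor.map (LC.paHom f g) ≫ Δ Y₁ Y₂ =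
      Δ X₁ X₂ ≫ LDd.paHom (toFunctor.map f) (toFunctor.map g)
  H1 : ∀ A B E : Cc,
    LDd.α (toFunctor.obj A) (toFunctor.obj B) (toFunctor.obj E) ≫
        LDd.otHom (μ A B) (𝟙 (toFunctor.obj E)) ≫ μ (LC.ot A B) E =
      LDd.otHom (𝟙 (toFunctor.obj A)) (μ B E) ≫ μ A (LC.ot B E) ≫ toFunctor.map (LC.α A B E)
  H2 : ∀ A B E : Cc,
    LDd.otHom (𝟙 (toFunctor.obj A)) (Δ B E) ≫
        LDd.δl (toFunctor.obj A) (toFunctor.obj B) (toFunctor.obj E) ≫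
        LDd.paHom (μ A B) (𝟙 (toFunctor.obj E)) =
      μ A (LC.pa B E) ≫ toFunctor.map (LC.δl A B E) ≫ Δ (LC.ot A B) E
  H3 : ∀ A B E : Cc,
    LDd.otHom (Δ A B) (𝟙 (toFunctor.obj E)) ≫
        LDd.δr (toFunctor.obj A) (toFunctor.obj B) (toFunctor.obj E) ≫
        LDd.paHom (𝟙 (toFunctor.obj A)) (μ B E) =
      μ (LC.pa A B) E ≫ toFunctor.map (LC.δr A B E) ≫ Δ A (LC.ot B E)
  H4 : ∀ A B E : Cc,
    Δ A (LC.pa B E) ≫ LDd.paHom (𝟙 (toFunctor.obj A)) (Δ B E) ≫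
        LDd.pα (toFunctor.obj A) (toFunctor.obj B) (toFunctor.obj E) =
      toFunctor.map (LC.pα A B E) ≫ Δ (LC.pa A B) E ≫
        LDd.paHom (Δ A B) (𝟙 (toFunctor.obj E))

variable {Cc : Type u₁} [Category.{v₁} Cc] {Dd : Type u₂} [Category.{v₂} Dd]
  {LC : LD Cc} {LDd : LD Dd}

/-- Tidiness of a Frobenius LD functor: the image of an object is never a tensor product. -/
def FrobLDFunctor.TidyF (F : FrobLDFunctor Cc Dd LC LDd) : Prop :=
  ∀ (A : Cc) (P Q : Dd),
    F.toFunctor.obj A ≠ LDd.ot P Q ∧ F.toFunctor.obj A ≠ LDd.pa P Q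

/-- Multiplicative morphisms of the target category of a Frobenius LD functor. -/
inductive Multiplicative (F : FrobLDFunctor Cc Dd LC LDd) : ∀ {W T : Dd}, (W ⟶ T) → Prop
  | id (X : Cc) : Multiplicative F (𝟙 (F.toFunctor.obj X))
  | mu {W₁ W₂ : Dd} {X Y : Cc} (f : W₁ ⟶ F.toFunctor.obj X) (g : W₂ ⟶ F.toFunctor.obj Y) :
      Multiplicative F f → Multiplicative F g →
      Multiplicative F (LDd.otHom f g ≫ F.μ X Y)

/-- `F`-atomic morphisms of the target category of a Frobenius LD functor. -/
inductive FAtomic (F : FrobLDFunctor Cc Dd LC LDd) : ∀ {W T : Dd}, (W ⟶ T) → Prop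
  | alpha (A B E : Dd) : FAtomic F (LDd.α A B E)
  | alphaInv (A B E : Dd) : FAtomic F (LDd.αInv A B E)
  | palpha (A B E : Dd) : FAtomic F (LDd.pα A B E)
  | palphaInv (A B E : Dd) : FAtomic F (LDd.pαInv A B E)
  | dl (A B E : Dd) : FAtomic F (LDd.δl A B E)
  | dr (A B E : Dd) : FAtomic F (LDd.δr A B E)
  | mu (X Y : Cc) : FAtomic F (F.μ X Y)
  | delta (X Y : Cc) : FAtomic F (F.Δ X Y)
  | map {X Y : Cc} (f : X ⟶ Y) : Elementary LC f → FAtomic F (F.toFunctor.map f)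
  | otRightId {W T : Dd} (f : W ⟶ T) (A : Dd) : FAtomic F f → FAtomic F (LDd.otHom f (𝟙 A))
  | otLeftId {W T : Dd} (f : W ⟶ T) (A : Dd) : FAtomic F f → FAtomic F (LDd.otHom (𝟙 A) f)
  | paRightId {W T : Dd} (f : W ⟶ T) (A : Dd) : FAtomic F f → FAtomic F (LDd.paHom f (𝟙 A))
  | paLeftId {W T : Dd} (f : W ⟶ T) (A : Dd) : FAtomic F f → FAtomic F (LDd.paHom (𝟙 A) f)

/-- `F`-elementary morphisms: identities and finite composites of `F`-atomic morphisms. -/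
inductive FElementary (F : FrobLDFunctor Cc Dd LC LDd) : ∀ {W T : Dd}, (W ⟶ T) → Prop
  | id (X : Dd) : FElementary F (𝟙 X)
  | of {W T : Dd} {f : W ⟶ T} : FAtomic F f → FElementary F f
  | comp {W T U : Dd} {f : W ⟶ T} {g : T ⟶ U} :
      FElementary F f → FElementary F g → FElementary F (f ≫ g)

/-- The set `𝔡` of morphisms of the form `Δ ∘ F(κ^i_u(X̄))`, where `i` is the identity of a
⅋-product of the source category. -/
def frakD (F : FrobLDFunctor Cc Dd LC LDd) ⦃P Q₁ Q₂ : Dd⦄ (g : P ⟶ LDd.pa Q₁ Q₂) : Prop :=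
  ∃ (Y Z : Cc) (w : ZW Cc) (hP : P = F.toFunctor.obj (Hpa LC (LC.pa Y Z) w))
    (h₁ : F.toFunctor.obj (Lpa LC Y w) = Q₁) (h₂ : F.toFunctor.obj (Rpa LC Z w) = Q₂),
    g = eqToHom hP ≫ F.toFunctor.map (kappa LC (𝟙 (LC.pa Y Z)) w) ≫
        F.Δ (Lpa LC Y w) (Rpa LC Z w) ≫ eqToHom (by rw [h₁, h₂])


section Aux

variable {C' : Type u} [Category.{v} C']

lemma ot_ll (L : LD C') {A : C'} {X Y Z : C'} (g : X ⟶ Y) (h : Y ⟶ Z) :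
    L.otHom (𝟙 A) (g ≫ h) = L.otHom (𝟙 A) g ≫ L.otHom (𝟙 A) h := by
  rw [← L.otHom_comp, Category.id_comp]

lemma ot_rr (L : LD C') {A : C'} {X Y Z : C'} (g : X ⟶ Y) (h : Y ⟶ Z) :
    L.otHom (g ≫ h) (𝟙 A) = L.otHom g (𝟙 A) ≫ L.otHom h (𝟙 A) := by
  rw [← L.otHom_comp, Category.id_comp]

/-- `α ≫ (α ⊗ id) ≫ α⁻¹ = (id ⊗ α⁻¹) ≫ α` (rearranged pentagon). -/
lemma pentA (L : LD C') (A B E D : C') :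
    L.α A (L.ot B E) D ≫ L.otHom (L.α A B E) (𝟙 D) ≫ L.αInv (L.ot A B) E D =
      L.otHom (𝟙 A) (L.αInv B E D) ≫ L.α A B (L.ot E D) := by
  have hP := L.P1 A B E D
  have h1 : L.otHom (𝟙 A) (L.α B E D) ≫
      (L.α A (L.ot B E) D ≫ L.otHom (L.α A B E) (𝟙 D) ≫ L.αInv (L.ot A B) E D) =
      L.α A B (L.ot E D) := by
    simp only [← Category.assoc] at hP ⊢
    rw [← hP, Category.assoc, L.α_αInv, Category.comp_id]
  calc L.α A (L.ot B E) D ≫ L.otHom (L.α A B E) (𝟙 D) ≫ L.αInv (L.ot A B) E D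
      = (L.otHom (𝟙 A) (L.αInv B E D) ≫ L.otHom (𝟙 A) (L.α B E D)) ≫
        (L.α A (L.ot B E) D ≫ L.otHom (L.α A B E) (𝟙 D) ≫ L.αInv (L.ot A B) E D) := by
        rw [← L.otHom_comp, L.αInv_α, Category.id_comp, L.otHom_id, Category.id_comp]
    _ = L.otHom (𝟙 A) (L.αInv B E D) ≫ L.α A B (L.ot E D) := by
        rw [Category.assoc, h1]

/-- `α ≫ (α⁻¹ ⊗ id) ≫ α⁻¹ = α⁻¹ ≫ (id ⊗ α)` (rearranged pentagon). -/
lemma pentB (L : LD C') (A B E D : C') :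
    L.α (L.ot A B) E D ≫ L.otHom (L.αInv A B E) (𝟙 D) ≫ L.αInv A (L.ot B E) D =
      L.αInv A B (L.ot E D) ≫ L.otHom (𝟙 A) (L.α B E D) := by
  have hP := L.P1 A B E D
  have h1 : L.α (L.ot A B) E D =
      L.αInv A B (L.ot E D) ≫ L.otHom (𝟙 A) (L.α B E D) ≫
        L.α A (L.ot B E) D ≫ L.otHom (L.α A B E) (𝟙 D) := by
    rw [← hP, ← Category.assoc, L.αInv_α, Category.id_comp]
  rw [h1]
  simp only [Category.assoc]
  rw [← Category.assoc (L.otHom (L.α A B E) (𝟙 D)), ← L.otHom_comp, L.α_αInv,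
    Category.comp_id, L.otHom_id, Category.id_comp, L.α_αInv, Category.comp_id]

lemma rel1 (L : LD C') {X Y Z : C'} (f : X ⟶ L.ot Y Z) (w : YW C') (A₁ A₂ : C') :
    L.α A₁ A₂ (Hot L X w) ≫ tau L f (YW.a (L.ot A₁ A₂) w) =
      tau L f (YW.a A₁ (YW.a A₂ w)) ≫
        L.otHom (L.α A₁ A₂ (Lot L Y w)) (𝟙 (Rot L Z w)) := by
  have nat := L.α_natural (𝟙 A₁) (𝟙 A₂) (tau L f w)
  rw [L.otHom_id] at nat
  simp only [tau, Lot, Rot, Hot]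
  rw [← Category.assoc, ← nat, Category.assoc, L.P1, ot_ll]
  simp only [Category.assoc]

lemma rel2 (L : LD C') {X Y Z : C'} (f : X ⟶ L.ot Y Z) (w : YW C') (A B : C') :
    L.α A (Hot L X w) B ≫ tau L f (YW.ainv B (YW.a A w)) =
      tau L f (YW.a A (YW.ainv B w)) := by
  have nat := L.α_natural (𝟙 A) (tau L f w) (𝟙 B)
  simp only [tau, Lot, Rot, Hot]
  rw [ot_rr, ot_ll]
  simp only [← Category.assoc]
  rw [← nat]
  simp only [Category.assoc]
  rw [pentA]

lemma rel3 (L : LD C') {X Y Z : C'} (f : X ⟶ L.ot Y Z) (w : YW C') (A B : C') :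
    L.α (Hot L X w) A B ≫ tau L f (YW.ainv B (YW.ainv A w)) =
      tau L f (YW.ainv (L.ot A B) w) ≫
        L.otHom (𝟙 (Lot L Y w)) (L.α (Rot L Z w) A B) := by
  have nat := L.α_natural (tau L f w) (𝟙 A) (𝟙 B)
  rw [L.otHom_id] at nat
  simp only [tau, Lot, Rot, Hot]
  rw [ot_rr]
  simp only [← Category.assoc]
  rw [← nat]
  simp only [Category.assoc]
  rw [pentB]

lemma rel4 (L : LD C') {X Y Z : C'} (f : X ⟶ L.ot Y Z) (w : YW C') (A B : C') :
    L.αInv (Hot L X w) A B ≫ tau L f (YW.ainv (L.ot A B) w) =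
      tau L f (YW.ainv B (YW.ainv A w)) ≫
        L.otHom (𝟙 (Lot L Y w)) (L.αInv (Rot L Z w) A B) := by
  have h := rel3 L f w A B
  have h2 : tau L f (YW.ainv B (YW.ainv A w)) =
      L.αInv (Hot L X w) A B ≫ tau L f (YW.ainv (L.ot A B) w) ≫
        L.otHom (𝟙 (Lot L Y w)) (L.α (Rot L Z w) A B) := by
    have e := congrArg (L.αInv (Hot L X w) A B ≫ ·) h
    exact (Category.id_comp _).symm.trans
      ((congrArg (· ≫ tau L f (YW.ainv B (YW.ainv A w))) (L.αInv_α _ _ _)).symm.trans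
        ((Category.assoc _ _ _).trans e))
  rw [h2]
  have hK : L.otHom (𝟙 (Lot L Y w)) (L.α (Rot L Z w) A B) ≫
      L.otHom (𝟙 (Lot L Y w)) (L.αInv (Rot L Z w) A B) = 𝟙 _ := by
    rw [← L.otHom_comp, L.α_αInv, Category.comp_id, L.otHom_id]
  exact (congrArg (L.αInv (Hot L X w) A B ≫ ·)
    (((congrArg (tau L f (YW.ainv (L.ot A B) w) ≫ ·) hK).trans (Category.comp_id _)).symm.trans
      (Category.assoc _ _ _).symm)).trans (Category.assoc _ _ _).symm

lemma rel5 (L : LD C') {X Y Z : C'} (f : X ⟶ L.ot Y Z) (w : YW C') (A B : C') :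
    L.αInv A (Hot L X w) B ≫ tau L f (YW.a A (YW.ainv B w)) =
      tau L f (YW.ainv B (YW.a A w)) := by
  exact (congrArg (L.αInv A (Hot L X w) B ≫ ·) (rel2 L f w A B)).symm.trans
    (((Category.assoc _ _ _).symm.trans
      (congrArg (· ≫ tau L f (YW.ainv B (YW.a A w))) (L.αInv_α _ _ _))).trans
      (Category.id_comp _))

lemma rel6 (L : LD C') {X Y Z : C'} (f : X ⟶ L.ot Y Z) (w : YW C') (A₁ A₂ : C') :
    L.αInv A₁ A₂ (Hot L X w) ≫ tau L f (YW.a A₁ (YW.a A₂ w)) =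
      tau L f (YW.a (L.ot A₁ A₂) w) ≫
        L.otHom (L.αInv A₁ A₂ (Lot L Y w)) (𝟙 (Rot L Z w)) := by
  have h := rel1 L f w A₁ A₂
  have h2 : tau L f (YW.a (L.ot A₁ A₂) w) =
      L.αInv A₁ A₂ (Hot L X w) ≫ tau L f (YW.a A₁ (YW.a A₂ w)) ≫
        L.otHom (L.α A₁ A₂ (Lot L Y w)) (𝟙 (Rot L Z w)) := by
    have e := congrArg (L.αInv A₁ A₂ (Hot L X w) ≫ ·) h
    exact (Category.id_comp _).symm.trans
      ((congrArg (· ≫ tau L f (YW.a (L.ot A₁ A₂) w)) (L.αInv_α _ _ _)).symm.trans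
        ((Category.assoc _ _ _).trans e))
  rw [h2]
  have hK : L.otHom (L.α A₁ A₂ (Lot L Y w)) (𝟙 (Rot L Z w)) ≫
      L.otHom (L.αInv A₁ A₂ (Lot L Y w)) (𝟙 (Rot L Z w)) = 𝟙 _ := by
    rw [← L.otHom_comp, L.α_αInv, Category.comp_id, L.otHom_id]
  exact (congrArg (L.αInv A₁ A₂ (Hot L X w) ≫ ·)
    (((congrArg (tau L f (YW.a A₁ (YW.a A₂ w)) ≫ ·) hK).trans (Category.comp_id _)).symm.trans
      (Category.assoc _ _ _).symm)).trans (Category.assoc _ _ _).symm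

end Aux

/-- The six relations satisfied by the family `(τ^f_u)` in a tidy LD category
(Lemma "pushing τ through"). -/
theorem tau_relations {C : Type u} [Category.{v} C] (L : LD C) (hTidy : L.Tidy)
    {X Y Z : C} (f : X ⟶ L.ot Y Z) :
    (∀ (w : YW C) (A₁ A₂ : C),
      L.α A₁ A₂ (Hot L X w) ≫ tau L f (YW.a (L.ot A₁ A₂) w) =
        tau L f (YW.a A₁ (YW.a A₂ w)) ≫
          L.otHom (L.α A₁ A₂ (Lot L Y w)) (𝟙 (Rot L Z w))) ∧
    (∀ (w : YW C) (A B : C),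
      L.α A (Hot L X w) B ≫ tau L f (YW.ainv B (YW.a A w)) =
        tau L f (YW.a A (YW.ainv B w))) ∧
    (∀ (w : YW C) (A B : C),
      L.α (Hot L X w) A B ≫ tau L f (YW.ainv B (YW.ainv A w)) =
        tau L f (YW.ainv (L.ot A B) w) ≫
          L.otHom (𝟙 (Lot L Y w)) (L.α (Rot L Z w) A B)) ∧
    (∀ (w : YW C) (A B : C),
      L.αInv (Hot L X w) A B ≫ tau L f (YW.ainv (L.ot A B) w) =
        tau L f (YW.ainv B (YW.ainv A w)) ≫
          L.otHom (𝟙 (Lot L Y w)) (L.αInv (Rot L Z w) A B)) ∧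
    (∀ (w : YW C) (A B : C),
      L.αInv A (Hot L X w) B ≫ tau L f (YW.a A (YW.ainv B w)) =
        tau L f (YW.ainv B (YW.a A w))) ∧
    (∀ (w : YW C) (A₁ A₂ : C),
      L.αInv A₁ A₂ (Hot L X w) ≫ tau L f (YW.a A₁ (YW.a A₂ w)) =
        tau L f (YW.a (L.ot A₁ A₂) w) ≫
          L.otHom (L.αInv A₁ A₂ (Lot L Y w)) (𝟙 (Rot L Z w))) := by
  exact ⟨rel1 L f, rel2 L f, rel3 L f, rel4 L f, rel5 L f, rel6 L f⟩

end LDCoherence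
end
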